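/- arXiv:2504.09093 — 6 statements merged into one kernel-verified Lean document; each statement's English description precedes it below -/
import Mathlib

section
/- Let λ₁, λ₂ be finite complex Borel measures on ℝ and let a₁, a₂, c₁, c₂ ∈ ℂ. If c₁ + a₁·w + ∫_ℝ (1+s·w)/(s−w) dλ₁(s) = c₂ + a₂·w + ∫_ℝ (1+s·w)/(s−w) dλ₂(s) for every w ∈ ℂ∖ℝ, then λ₁ = λ₂, a₁ = a₂ and c₁ = c₂. -/
namespace Stmt0Aux

open MeasureTheory Filter Topology Set Real

lemma sub_ne (w : ℂ) (hw : w.im ≠ 0) (s : ℝ) : (s : ℂ) - w ≠ 0 := by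
  intro h
  apply hw
  have : w = (s : ℂ) := by linear_combination -h
  rw [this]
  simp

lemma norm_inv_sub_le (w : ℂ) (hw : w.im ≠ 0) (s : ℝ) : ‖((s:ℂ) - w)⁻¹‖ ≤ |w.im|⁻¹ := by
  rw [norm_inv]
  have h1 : |w.im| ≤ ‖(s:ℂ) - w‖ := by
    have := Complex.abs_im_le_norm ((s:ℂ) - w)
    simpa using this
  exact inv_anti₀ (abs_pos.mpr hw) h1

lemma meas_inv_sub (w : ℂ) (hw : w.im ≠ 0) :
    Continuous (fun s : ℝ => ((s:ℂ) - w)⁻¹) :=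
  (Complex.continuous_ofReal.sub continuous_const).inv₀ (fun s => sub_ne w hw s)

lemma integrable_res {μ : Measure ℝ} [IsFiniteMeasure μ] {g : ℝ → ℂ}
    (hg : Integrable g μ) {w : ℂ} (hw : w.im ≠ 0) :
    Integrable (fun s : ℝ => ((s:ℂ) - w)⁻¹ * g s) μ :=
  hg.bdd_mul (c := |w.im|⁻¹) (meas_inv_sub w hw).aestronglyMeasurable (Eventually.of_forall (norm_inv_sub_le w hw))

end Stmt0Aux
namespace Stmt0Aux2

open MeasureTheory Filter Topology Set Real

lemma poisson_pos (x y : ℝ) (hy : 0 < y) (s : ℝ) : 0 < (s - x)^2 + y^2 := by positivity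

lemma cont_poisson (x y : ℝ) (hy : 0 < y) :
    Continuous (fun s : ℝ => ((((s - x)^2 + y^2)⁻¹ : ℝ) : ℂ)) := by
  refine Complex.continuous_ofReal.comp ?_
  exact (by fun_prop : Continuous fun s : ℝ => (s - x)^2 + y^2).inv₀
    (fun s => (poisson_pos x y hy s).ne')

lemma integrable_poisson {μ : Measure ℝ} [IsFiniteMeasure μ] {g : ℝ → ℂ}
    (hg : Integrable g μ) (x y : ℝ) (hy : 0 < y) :
    Integrable (fun s : ℝ => ((((s - x)^2 + y^2)⁻¹ : ℝ) : ℂ) * g s) μ := by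
  refine hg.bdd_mul (c := (y^2)⁻¹) (cont_poisson x y hy).aestronglyMeasurable (Eventually.of_forall fun s => ?_)
  rw [Complex.norm_real, Real.norm_eq_abs, abs_of_pos (by positivity)]
  exact inv_anti₀ (by positivity) (by nlinarith [sq_nonneg (s-x)])

lemma kernel_split (w : ℂ) (hw : w.im ≠ 0) (s : ℝ) :
    (1 + (s:ℂ) * w) / ((s:ℂ) - w) = w + (1 + w^2) * ((s:ℂ) - w)⁻¹ := by
  have h : (s : ℂ) - w ≠ 0 := by
    intro h; apply hw
    have : w = (s : ℂ) := by linear_combination -h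
    rw [this]; simp
  field_simp
  ring

lemma kernel_at_I (s : ℝ) :
    (1 + (s:ℂ) * Complex.I) / ((s:ℂ) - Complex.I) = Complex.I := by
  have h : (s : ℂ) - Complex.I ≠ 0 := by
    intro h
    have := congrArg Complex.im h
    simp at this
  field_simp
  linear_combination Complex.I_sq

lemma kernel_at_negI (s : ℝ) :
    (1 + (s:ℂ) * (-Complex.I)) / ((s:ℂ) - (-Complex.I)) = -Complex.I := by
  have h : (s : ℂ) + Complex.I ≠ 0 := by
    intro h
    have := congrArg Complex.im h
    simp at this
  rw [sub_neg_eq_add]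
  field_simp
  linear_combination Complex.I_sq

lemma resolvent_diff (x y : ℝ) (hy : 0 < y) (s : ℝ) :
    ((s:ℂ) - ((x:ℂ) + (y:ℂ) * Complex.I))⁻¹ - ((s:ℂ) - ((x:ℂ) - (y:ℂ) * Complex.I))⁻¹
      = (2 * (y:ℂ) * Complex.I) * ((((s - x)^2 + y^2 : ℝ)) : ℂ)⁻¹ := by
  have h1 : (s:ℂ) - ((x:ℂ) + (y:ℂ) * Complex.I) ≠ 0 := by
    intro h
    have := congrArg Complex.im h
    simp at this
    exact hy.ne' this
  have h2 : (s:ℂ) - ((x:ℂ) - (y:ℂ) * Complex.I) ≠ 0 := by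
    intro h
    have := congrArg Complex.im h
    simp at this
    exact hy.ne' this
  have h3 : ((((s - x)^2 + y^2 : ℝ)) : ℂ) ≠ 0 := by
    exact_mod_cast (poisson_pos x y hy s).ne'
  rw [inv_sub_inv h1 h2, div_eq_mul_inv]
  have key : ((s:ℂ) - ((x:ℂ) + (y:ℂ) * Complex.I)) * ((s:ℂ) - ((x:ℂ) - (y:ℂ) * Complex.I))
      = (((s - x)^2 + y^2 : ℝ) : ℂ) := by
    push_cast
    linear_combination (-(y:ℂ)^2) * Complex.I_sq
  rw [key]
  congr 1
  ring

lemma arctan_antideriv (a b s y : ℝ) (hy : 0 < y) :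
    ∫ x in a..b, ((x - s)^2 + y^2)⁻¹
      = (1/y) * (arctan ((b - s)/y) - arctan ((a - s)/y)) := by
  have hderiv : ∀ x : ℝ, HasDerivAt (fun x : ℝ => (1/y) * arctan ((x - s)/y))
      (((x - s)^2 + y^2)⁻¹) x := by
    intro x
    have h1 : HasDerivAt (fun x : ℝ => (x - s)/y) (1/y) x := by
      simpa using ((hasDerivAt_id x).sub_const s).div_const y
    have h2 := (Real.hasDerivAt_arctan ((x - s)/y)).comp x h1
    have h3 := h2.const_mul (1/y)
    refine h3.congr_deriv ?_
    field_simp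
    ring
  rw [intervalIntegral.integral_eq_sub_of_hasDerivAt (fun x _ => hderiv x)
      (((by fun_prop : Continuous fun x : ℝ => (x - s)^2 + y^2).inv₀
        (fun x => (by positivity : (0:ℝ) < (x-s)^2 + y^2).ne')).intervalIntegrable a b)]
  ring

end Stmt0Aux2


namespace Stmt0Aux3

open MeasureTheory Filter Topology Set Real

lemma fubini_poisson (μ : Measure ℝ) [IsFiniteMeasure μ] (g : ℝ → ℂ)
    (hg : Integrable g μ) (a b y : ℝ) (hy : 0 < y) (hab : a ≤ b) :
    ∫ x in a..b, (∫ s, ((((s - x)^2 + y^2)⁻¹ : ℝ) : ℂ) * g s ∂μ)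
      = ∫ s, (((1/y) * (arctan ((b - s)/y) - arctan ((a - s)/y)) : ℝ) : ℂ) * g s ∂μ := by
  haveI : IsFiniteMeasure (volume.restrict (Ioc a b)) := by
    constructor
    rw [Measure.restrict_apply_univ, Real.volume_Ioc]
    exact ENNReal.ofReal_lt_top
  rw [intervalIntegral.integral_of_le hab]
  set ν := volume.restrict (Ioc a b)
  have hcont : Continuous fun p : ℝ × ℝ => ((((p.2 - p.1)^2 + y^2)⁻¹ : ℝ) : ℂ) := by
    refine Complex.continuous_ofReal.comp ?_
    exact (by fun_prop : Continuous fun p : ℝ × ℝ => (p.2 - p.1)^2 + y^2).inv₀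
      (fun p => (by positivity : (0:ℝ) < (p.2 - p.1)^2 + y^2).ne')
  have hint : Integrable (Function.uncurry fun x s =>
      ((((s - x)^2 + y^2)⁻¹ : ℝ) : ℂ) * g s) (ν.prod μ) := by
    have hdom : Integrable (fun p : ℝ × ℝ => ((y^2)⁻¹ : ℝ) * ‖g p.2‖) (ν.prod μ) :=
      (integrable_const ((y^2)⁻¹ : ℝ)).mul_prod hg.norm
    refine hdom.mono' (hcont.aestronglyMeasurable.mul hg.aestronglyMeasurable.comp_snd) ?_
    refine Eventually.of_forall fun p => ?_
    rw [Function.uncurry, norm_mul, Complex.norm_real, Real.norm_eq_abs,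
      abs_of_pos (by positivity)]
    refine mul_le_mul_of_nonneg_right ?_ (norm_nonneg _)
    exact inv_anti₀ (by positivity) (by nlinarith [sq_nonneg (p.2 - p.1)])
  rw [integral_integral_swap hint]
  refine integral_congr_ae (Eventually.of_forall fun s => ?_)
  dsimp only
  rw [integral_mul_const]
  congr 1
  have : ∫ x, ((((s - x)^2 + y^2)⁻¹ : ℝ) : ℂ) ∂ν
      = ((∫ x, (((s - x)^2 + y^2)⁻¹ : ℝ) ∂ν : ℝ) : ℂ) := integral_ofReal
  rw [this]
  norm_cast
  have := Stmt0Aux2.arctan_antideriv a b s y hy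
  rw [← intervalIntegral.integral_of_le hab]
  rw [show (fun x : ℝ => ((s - x)^2 + y^2)⁻¹) = (fun x : ℝ => ((x - s)^2 + y^2)⁻¹) by
    funext x; rw [show (s-x)^2 = (x-s)^2 by ring]]
  exact this

end Stmt0Aux3
namespace Stmt0Aux4

open MeasureTheory Filter Topology Set Real

lemma tendsto_t : Tendsto (fun n : ℕ => ((n:ℝ)+1)) atTop atTop :=
  tendsto_atTop_add_const_right _ 1 tendsto_natCast_atTop_atTop

lemma tendsto_quadratic_atTop (c d : ℝ) (h : 0 < c ∨ (c = 0 ∧ 0 < d)) :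
    Tendsto (fun n : ℕ => c * ((n:ℝ)+1)^2 + d * ((n:ℝ)+1)) atTop atTop := by
  rcases h with hc | ⟨hc, hd⟩
  · have h2 : Tendsto (fun n : ℕ => c * ((n:ℝ)+1) + d) atTop atTop :=
      tendsto_atTop_add_const_right _ d (tendsto_t.const_mul_atTop hc)
    exact (tendsto_t.atTop_mul_atTop₀ h2).congr fun n => by ring
  · exact (tendsto_t.const_mul_atTop hd).congr fun n => by rw [hc]; ring

lemma tendsto_quadratic_atBot (c d : ℝ) (h : c < 0 ∨ (c = 0 ∧ d < 0)) :
    Tendsto (fun n : ℕ => c * ((n:ℝ)+1)^2 + d * ((n:ℝ)+1)) atTop atBot := by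
  rw [← tendsto_neg_atTop_iff]
  have h' : 0 < -c ∨ (-c = 0 ∧ 0 < -d) := by
    rcases h with h | ⟨h1, h2⟩
    · exact Or.inl (by linarith)
    · exact Or.inr ⟨by linarith, by linarith⟩
  exact (tendsto_quadratic_atTop (-c) (-d) h').congr fun n => by ring

lemma tendsto_arctan_comp_atTop {f : ℕ → ℝ} (hf : Tendsto f atTop atTop) :
    Tendsto (fun n => arctan (f n)) atTop (𝓝 (π/2)) :=
  (Real.tendsto_arctan_atTop.mono_right nhdsWithin_le_nhds).comp hf

lemma tendsto_arctan_comp_atBot {f : ℕ → ℝ} (hf : Tendsto f atTop atBot) :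
    Tendsto (fun n => arctan (f n)) atTop (𝓝 (-(π/2))) :=
  (Real.tendsto_arctan_atBot.mono_right nhdsWithin_le_nhds).comp hf

lemma tendsto_arctan_diff (α β s : ℝ) (hαβ : α < β) :
    Tendsto (fun n : ℕ => arctan ((β - 1/((n:ℝ)+1) - s) / ((1/((n:ℝ)+1))^2))
        - arctan ((α + 1/((n:ℝ)+1) - s) / ((1/((n:ℝ)+1))^2))) atTop
      (𝓝 (if s ∈ Ioo α β then π else 0)) := by
  have harg1 : ∀ n : ℕ, (β - 1/((n:ℝ)+1) - s) / ((1/((n:ℝ)+1))^2)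
      = (β - s) * ((n:ℝ)+1)^2 + (-1) * ((n:ℝ)+1) := by
    intro n
    have ht : ((n:ℝ)+1) ≠ 0 := by positivity
    field_simp
    ring
  have harg2 : ∀ n : ℕ, (α + 1/((n:ℝ)+1) - s) / ((1/((n:ℝ)+1))^2)
      = (α - s) * ((n:ℝ)+1)^2 + 1 * ((n:ℝ)+1) := by
    intro n
    have ht : ((n:ℝ)+1) ≠ 0 := by positivity
    field_simp
    ring
  have hl1 : Tendsto (fun n : ℕ => arctan ((β - 1/((n:ℝ)+1) - s) / ((1/((n:ℝ)+1))^2)))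
      atTop (𝓝 (if s < β then π/2 else -(π/2))) := by
    simp only [harg1]
    split_ifs with h
    · exact tendsto_arctan_comp_atTop (tendsto_quadratic_atTop _ _ (Or.inl (by linarith)))
    · refine tendsto_arctan_comp_atBot (tendsto_quadratic_atBot _ _ ?_)
      rcases lt_or_eq_of_le (not_lt.mp h) with h' | h'
      · exact Or.inl (by linarith)
      · exact Or.inr ⟨by linarith, by norm_num⟩
  have hl2 : Tendsto (fun n : ℕ => arctan ((α + 1/((n:ℝ)+1) - s) / ((1/((n:ℝ)+1))^2)))
      atTop (𝓝 (if s ≤ α then π/2 else -(π/2))) := by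
    simp only [harg2]
    split_ifs with h
    · rcases lt_or_eq_of_le h with h' | h'
      · exact tendsto_arctan_comp_atTop (tendsto_quadratic_atTop _ _ (Or.inl (by linarith)))
      · exact tendsto_arctan_comp_atTop
          (tendsto_quadratic_atTop _ _ (Or.inr ⟨by linarith, by norm_num⟩))
    · exact tendsto_arctan_comp_atBot (tendsto_quadratic_atBot _ _ (Or.inl (by linarith [not_le.mp h])))
  have h3 : (if s < β then π/2 else -(π/2)) - (if s ≤ α then π/2 else -(π/2))
      = (if s ∈ Ioo α β then π else 0) := by
    by_cases hb : s < β <;> by_cases ha : s ≤ α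
    · rw [if_pos hb, if_pos ha, if_neg (by intro hx; exact absurd hx.1 (not_lt.mpr ha))]
      ring
    · rw [if_pos hb, if_neg ha, if_pos (mem_Ioo.mpr ⟨not_le.mp ha, hb⟩)]
      ring
    · exact absurd (lt_of_le_of_lt ha hαβ) hb
    · rw [if_neg hb, if_neg ha, if_neg (by intro hx; exact absurd hx.2 hb)]
      ring
  exact h3 ▸ hl1.sub hl2

end Stmt0Aux4
namespace Stmt0Aux5

open MeasureTheory Filter Topology Set Real

lemma abs_arctan_le (t : ℝ) : |arctan t| ≤ π/2 :=
  abs_le.mpr ⟨(Real.neg_pi_div_two_lt_arctan t).le, (Real.arctan_lt_pi_div_two t).le⟩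

lemma transform_eq {μ : Measure ℝ} [IsFiniteMeasure μ] {g : ℝ → ℂ}
    (hg : Integrable g μ) {w : ℂ} (hw : w.im ≠ 0) :
    ∫ s, ((1 + (s:ℂ) * w) / ((s:ℂ) - w)) * g s ∂μ
      = w * (∫ s, g s ∂μ) + (1 + w^2) * ∫ s, ((s:ℂ) - w)⁻¹ * g s ∂μ := by
  have h1 : (fun s : ℝ => ((1 + (s:ℂ) * w) / ((s:ℂ) - w)) * g s)
      = fun s : ℝ => w * g s + (1 + w^2) * (((s:ℂ) - w)⁻¹ * g s) := by
    funext s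
    rw [Stmt0Aux2.kernel_split w hw s]
    ring
  rw [h1, integral_add (hg.const_mul w) ((Stmt0Aux.integrable_res hg hw).const_mul _),
    integral_const_mul, integral_const_mul]

lemma resdiff_eq {μ : Measure ℝ} [IsFiniteMeasure μ] {g : ℝ → ℂ}
    (hg : Integrable g μ) (x y : ℝ) (hy : 0 < y) :
    (∫ s, ((s:ℂ) - ((x:ℂ) + (y:ℂ) * Complex.I))⁻¹ * g s ∂μ)
      - (∫ s, ((s:ℂ) - ((x:ℂ) - (y:ℂ) * Complex.I))⁻¹ * g s ∂μ)
      = (2 * (y:ℂ) * Complex.I) * ∫ s, ((((s - x)^2 + y^2)⁻¹ : ℝ) : ℂ) * g s ∂μ := by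
  have hw1 : ((x:ℂ) + (y:ℂ) * Complex.I).im ≠ 0 := by simpa using hy.ne'
  have hw2 : ((x:ℂ) - (y:ℂ) * Complex.I).im ≠ 0 := by simpa using hy.ne'
  rw [← integral_sub (Stmt0Aux.integrable_res hg hw1) (Stmt0Aux.integrable_res hg hw2),
    ← integral_const_mul]
  refine integral_congr_ae (Eventually.of_forall fun s => ?_)
  dsimp only
  rw [Complex.ofReal_inv]
  linear_combination (g s) * Stmt0Aux2.resolvent_diff x y hy s

end Stmt0Aux5
namespace Stmt0Aux6

open MeasureTheory Filter Topology Set Real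

lemma ind_integral (μ : Measure ℝ) (g : ℝ → ℂ) (α β : ℝ) :
    ∫ s, (((if s ∈ Ioo α β then π else (0:ℝ)) : ℝ) : ℂ) * g s ∂μ
      = (π:ℂ) * ∫ s in Ioo α β, g s ∂μ := by
  rw [← integral_indicator measurableSet_Ioo, ← integral_const_mul]
  refine integral_congr_ae (Eventually.of_forall fun s => ?_)
  by_cases hs : s ∈ Ioo α β <;> simp [hs, indicator_of_mem, indicator_of_notMem]

lemma tendsto_Fn {μ : Measure ℝ} [IsFiniteMeasure μ] {g : ℝ → ℂ}
    (hg : Integrable g μ) (α β : ℝ) (hαβ : α < β) :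
    Tendsto (fun n : ℕ => ∫ s, ((arctan ((β - 1/((n:ℝ)+1) - s) / ((1/((n:ℝ)+1))^2))
        - arctan ((α + 1/((n:ℝ)+1) - s) / ((1/((n:ℝ)+1))^2)) : ℝ) : ℂ) * g s ∂μ) atTop
      (𝓝 (∫ s, (((if s ∈ Ioo α β then π else (0:ℝ)) : ℝ) : ℂ) * g s ∂μ)) := by
  apply tendsto_integral_of_dominated_convergence (fun s => π * ‖g s‖)
  · intro n
    have hc : Continuous fun s : ℝ => (arctan ((β - 1/((n:ℝ)+1) - s) / ((1/((n:ℝ)+1))^2))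
        - arctan ((α + 1/((n:ℝ)+1) - s) / ((1/((n:ℝ)+1))^2)) : ℝ) := by
      apply Continuous.sub <;> exact Real.continuous_arctan.comp (by fun_prop)
    exact ((Complex.continuous_ofReal.comp hc).aestronglyMeasurable).mul hg.1
  · exact hg.norm.const_mul π
  · intro n
    refine Eventually.of_forall fun s => ?_
    rw [norm_mul, Complex.norm_real, Real.norm_eq_abs]
    refine mul_le_mul_of_nonneg_right ?_ (norm_nonneg _)
    have h1 := Stmt0Aux5.abs_arctan_le ((β - 1/((n:ℝ)+1) - s) / ((1/((n:ℝ)+1))^2))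
    have h2 := Stmt0Aux5.abs_arctan_le ((α + 1/((n:ℝ)+1) - s) / ((1/((n:ℝ)+1))^2))
    rw [abs_le] at h1 h2 ⊢
    constructor <;> [linarith [h1.1, h2.2, Real.pi_pos]; linarith [h1.2, h2.1, Real.pi_pos]]
  · refine Eventually.of_forall fun s => ?_
    exact ((Complex.continuous_ofReal.tendsto _).comp
      (Stmt0Aux4.tendsto_arctan_diff α β s hαβ)).mul_const (g s)

lemma tendsto_univ {μ : Measure ℝ} [IsFiniteMeasure μ] {g : ℝ → ℂ} (hg : Integrable g μ) :
    Tendsto (fun n : ℕ => ∫ s in Ioo (-(n:ℝ)-1) ((n:ℝ)+1), g s ∂μ) atTop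
      (𝓝 (∫ s, g s ∂μ)) := by
  have hrw : ∀ n : ℕ, ∫ s in Ioo (-(n:ℝ)-1) ((n:ℝ)+1), g s ∂μ
      = ∫ s, (Ioo (-(n:ℝ)-1) ((n:ℝ)+1)).indicator g s ∂μ :=
    fun n => (integral_indicator measurableSet_Ioo).symm
  simp only [hrw]
  apply tendsto_integral_of_dominated_convergence (fun s => ‖g s‖)
  · exact fun n => hg.1.indicator measurableSet_Ioo
  · exact hg.norm
  · exact fun n => Eventually.of_forall fun s => norm_indicator_le_norm_self _ _
  · refine Eventually.of_forall fun s => ?_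
    refine Tendsto.congr' ?_ tendsto_const_nhds
    filter_upwards [eventually_ge_atTop ⌈|s|⌉₊] with n hn
    have h1 : |s| ≤ (n:ℝ) := (Nat.le_ceil |s|).trans (Nat.cast_le.mpr hn)
    rw [abs_le] at h1
    exact (indicator_of_mem (mem_Ioo.mpr ⟨by linarith [h1.1], by linarith [h1.2]⟩) g).symm

end Stmt0Aux6
open MeasureTheory Filter Topology

/-- **Uniqueness of representing data.**
A finite complex Borel measure on `ℝ` is encoded as a finite positive measure `μ`
together with an integrable complex density `g` (every complex measure is of this form);
the integral of `f` against it is `∫ s, f s * g s ∂μ`, and equality of two such complex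
measures means equality of the integrals over every measurable set. -/
theorem stmt0
    (μ₁ μ₂ : Measure ℝ) [IsFiniteMeasure μ₁] [IsFiniteMeasure μ₂]
    (g₁ g₂ : ℝ → ℂ) (hg₁ : Integrable g₁ μ₁) (hg₂ : Integrable g₂ μ₂)
    (a₁ a₂ c₁ c₂ : ℂ)
    (h : ∀ w : ℂ, w.im ≠ 0 →
      c₁ + a₁ * w + ∫ s, ((1 + (s : ℂ) * w) / ((s : ℂ) - w)) * g₁ s ∂μ₁
        = c₂ + a₂ * w + ∫ s, ((1 + (s : ℂ) * w) / ((s : ℂ) - w)) * g₂ s ∂μ₂) :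
    (∀ E : Set ℝ, MeasurableSet E → ∫ s in E, g₁ s ∂μ₁ = ∫ s in E, g₂ s ∂μ₂)
      ∧ a₁ = a₂ ∧ c₁ = c₂ := by
  classical
  have hI := h Complex.I (by simp)
  have hnI := h (-Complex.I) (by simp)
  have e1 : ∀ (μ : Measure ℝ) (g : ℝ → ℂ),
      ∫ s, ((1 + (s:ℂ) * Complex.I) / ((s:ℂ) - Complex.I)) * g s ∂μ
        = Complex.I * ∫ s, g s ∂μ := by
    intro μ g
    rw [← integral_const_mul]
    exact integral_congr_ae (Eventually.of_forall fun s => by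
      dsimp only; rw [Stmt0Aux2.kernel_at_I])
  have e2 : ∀ (μ : Measure ℝ) (g : ℝ → ℂ),
      ∫ s, ((1 + (s:ℂ) * (-Complex.I)) / ((s:ℂ) - (-Complex.I))) * g s ∂μ
        = (-Complex.I) * ∫ s, g s ∂μ := by
    intro μ g
    rw [← integral_const_mul]
    exact integral_congr_ae (Eventually.of_forall fun s => by
      dsimp only; rw [Stmt0Aux2.kernel_at_negI])
  rw [e1, e1] at hI
  rw [e2, e2] at hnI
  set T₁ := ∫ s, g₁ s ∂μ₁ with hT1
  set T₂ := ∫ s, g₂ s ∂μ₂ with hT2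
  have hc : c₁ = c₂ := by linear_combination (hI + hnI) / 2
  have h2I : (2 * Complex.I) * (a₁ + T₁) = (2 * Complex.I) * (a₂ + T₂) := by
    linear_combination hI - hnI
  have haT : a₁ + T₁ = a₂ + T₂ :=
    mul_left_cancel₀ (by simp [Complex.I_ne_zero]) h2I
  -- Step 2 : equality of resolvent transforms
  have hH : ∀ w : ℂ, w.im ≠ 0 → 1 + w^2 ≠ 0 →
      (∫ s, ((s:ℂ) - w)⁻¹ * g₁ s ∂μ₁) = ∫ s, ((s:ℂ) - w)⁻¹ * g₂ s ∂μ₂ := by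
    intro w hw hw2
    have hw' := h w hw
    rw [Stmt0Aux5.transform_eq hg₁ hw, Stmt0Aux5.transform_eq hg₂ hw] at hw'
    refine mul_left_cancel₀ hw2 ?_
    linear_combination hw' - w * haT - hc
  -- nonvanishing of 1 + w ^ 2
  have hfac : ∀ w : ℂ, 1 + w^2 = (w - Complex.I) * (w + Complex.I) := fun w => by
    linear_combination Complex.I_sq
  have hq : ∀ w : ℂ, w.im ≠ 1 → w.im ≠ -1 → 1 + w^2 ≠ 0 := by
    intro w h1 h2 h0
    rw [hfac w, mul_eq_zero] at h0
    rcases h0 with h0 | h0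
    · rw [sub_eq_zero] at h0
      exact h1 (by rw [h0]; simp)
    · exact h2 (by rw [eq_neg_of_add_eq_zero_left h0]; simp)
  -- Step 3 : equality of Poisson transforms
  have hP : ∀ x y : ℝ, 0 < y → y < 1 →
      (∫ s, ((((s - x)^2 + y^2)⁻¹ : ℝ) : ℂ) * g₁ s ∂μ₁)
        = ∫ s, ((((s - x)^2 + y^2)⁻¹ : ℝ) : ℂ) * g₂ s ∂μ₂ := by
    intro x y hy hy1
    have hw1im : ((x:ℂ) + (y:ℂ) * Complex.I).im ≠ 0 := by simpa using hy.ne'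
    have hw2im : ((x:ℂ) - (y:ℂ) * Complex.I).im ≠ 0 := by simpa using hy.ne'
    have him1 : ((x:ℂ) + (y:ℂ) * Complex.I).im = y := by simp
    have him2 : ((x:ℂ) - (y:ℂ) * Complex.I).im = -y := by simp
    have hq1 : 1 + ((x:ℂ) + (y:ℂ) * Complex.I)^2 ≠ 0 := by
      refine hq _ (by rw [him1]; exact hy1.ne) (by rw [him1]; intro hh; linarith)
    have hq2 : 1 + ((x:ℂ) - (y:ℂ) * Complex.I)^2 ≠ 0 := by
      refine hq _ (by rw [him2]; intro hh; linarith) (by rw [him2]; intro hh; linarith)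
    have hs1 := hH _ hw1im hq1
    have hs2 := hH _ hw2im hq2
    have hd1 := Stmt0Aux5.resdiff_eq hg₁ x y hy
    have hd2 := Stmt0Aux5.resdiff_eq hg₂ x y hy
    have hyI : (2 * (y:ℂ) * Complex.I) ≠ 0 := by
      simp [hy.ne', Complex.I_ne_zero]
    refine mul_left_cancel₀ hyI ?_
    rw [← hd1, ← hd2, hs1, hs2]
  -- Step 4 : equality on open intervals
  have hIoo : ∀ α β : ℝ, ∫ s in Set.Ioo α β, g₁ s ∂μ₁ = ∫ s in Set.Ioo α β, g₂ s ∂μ₂ := by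
    intro α β
    rcases le_or_gt β α with hle | hαβ
    · rw [Set.Ioo_eq_empty (not_lt.mpr hle)]
      simp
    · have hl1 := Stmt0Aux6.tendsto_Fn hg₁ α β hαβ
      have hl2 := Stmt0Aux6.tendsto_Fn hg₂ α β hαβ
      have heq : ∀ᶠ n : ℕ in atTop,
          (∫ s, ((Real.arctan ((β - 1/((n:ℝ)+1) - s) / ((1/((n:ℝ)+1))^2))
              - Real.arctan ((α + 1/((n:ℝ)+1) - s) / ((1/((n:ℝ)+1))^2)) : ℝ) : ℂ) * g₁ s ∂μ₁)
            = ∫ s, ((Real.arctan ((β - 1/((n:ℝ)+1) - s) / ((1/((n:ℝ)+1))^2))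
              - Real.arctan ((α + 1/((n:ℝ)+1) - s) / ((1/((n:ℝ)+1))^2)) : ℝ) : ℂ) * g₂ s ∂μ₂ := by
        have hεlim : Tendsto (fun n : ℕ => 1/((n:ℝ)+1)) atTop (𝓝 0) :=
          tendsto_one_div_add_atTop_nhds_zero_nat
        have hev : ∀ᶠ n : ℕ in atTop, 1/((n:ℝ)+1) < min 1 ((β - α)/2) :=
          hεlim.eventually (gt_mem_nhds (lt_min one_pos (by linarith)))
        filter_upwards [hev] with n hn
        set e := 1/((n:ℝ)+1) with he
        have hε0 : 0 < e := by rw [he]; positivity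
        have hy0 : 0 < e^2 := by positivity
        have hy1 : e^2 < 1 := by
          have he1 : e < 1 := lt_of_lt_of_le hn (min_le_left _ _)
          nlinarith
        have hab : α + e ≤ β - e := by
          have := lt_of_lt_of_le hn (min_le_right _ _)
          linarith
        have hswap : (∫ x in (α+e)..(β-e),
              (∫ s, ((((s - x)^2 + (e^2)^2)⁻¹ : ℝ) : ℂ) * g₁ s ∂μ₁))
            = ∫ x in (α+e)..(β-e),
              (∫ s, ((((s - x)^2 + (e^2)^2)⁻¹ : ℝ) : ℂ) * g₂ s ∂μ₂) :=
          intervalIntegral.integral_congr fun x _ => hP x (e^2) hy0 hy1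
        rw [Stmt0Aux3.fubini_poisson μ₁ g₁ hg₁ _ _ _ hy0 hab,
          Stmt0Aux3.fubini_poisson μ₂ g₂ hg₂ _ _ _ hy0 hab] at hswap
        have hmul := congrArg (fun z => ((e^2 : ℝ) : ℂ) * z) hswap
        simp only [← integral_const_mul] at hmul
        have hrw : ∀ (g : ℝ → ℂ) (s : ℝ),
            ((e^2 : ℝ) : ℂ) * ((((1/(e^2)) * (Real.arctan ((β - e - s)/(e^2))
                - Real.arctan ((α + e - s)/(e^2))) : ℝ) : ℂ) * g s)
            = ((Real.arctan ((β - e - s)/(e^2))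
                - Real.arctan ((α + e - s)/(e^2)) : ℝ) : ℂ) * g s := by
          intro g s
          rw [← mul_assoc, ← Complex.ofReal_mul,
            show (e^2) * ((1/(e^2)) * (Real.arctan ((β - e - s)/(e^2))
              - Real.arctan ((α + e - s)/(e^2))))
              = Real.arctan ((β - e - s)/(e^2)) - Real.arctan ((α + e - s)/(e^2)) by
                field_simp]
        simp only [hrw] at hmul
        exact hmul
      have hkey := tendsto_nhds_unique (hl1.congr' heq) hl2
      rw [Stmt0Aux6.ind_integral, Stmt0Aux6.ind_integral] at hkey
      exact mul_left_cancel₀ (by exact_mod_cast Real.pi_ne_zero) hkey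
  -- Step 5 : total masses agree
  have huniv : T₁ = T₂ :=
    tendsto_nhds_unique
      ((Stmt0Aux6.tendsto_univ hg₁).congr fun n => hIoo _ _)
      (Stmt0Aux6.tendsto_univ hg₂)
  have ha : a₁ = a₂ := by linear_combination haT - huniv
  refine ⟨?_, ha, hc⟩
  -- Step 6 : π-λ argument
  have hgen : (inferInstance : MeasurableSpace ℝ)
      = .generateFrom (⋃ (a : ℚ) (b : ℚ) (_ : a < b), {Set.Ioo (a : ℝ) (b : ℝ)}) := by
    conv_lhs => rw [BorelSpace.measurable_eq (α := ℝ)]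
    exact Real.borel_eq_generateFrom_Ioo_rat
  intro E hE
  refine MeasurableSpace.induction_on_inter
    (C := fun E _ => ∫ s in E, g₁ s ∂μ₁ = ∫ s in E, g₂ s ∂μ₂)
    hgen Real.isPiSystem_Ioo_rat (by simp) ?_ ?_ ?_ E hE
  · intro t ht
    simp only [Set.mem_iUnion, Set.mem_singleton_iff] at ht
    obtain ⟨a, b, hab, rfl⟩ := ht
    exact hIoo _ _
  · intro t ht hC
    have e1 := integral_add_compl ht hg₁
    have e2 := integral_add_compl ht hg₂
    linear_combination e1 - e2 - hC + huniv
  · intro f hd hm hC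
    rw [integral_iUnion hm hd hg₁.integrableOn, integral_iUnion hm hd hg₂.integrableOn]
    exact tsum_congr hC
end

section
/- Let φ be holomorphic on the upper half plane ℂ₊ = {z ∈ ℂ : Im z > 0} with Im φ(z) > 0 for all z ∈ ℂ₊. Then for every z ∈ ℂ₊, |φ(z)| ≤ ((1+√2)/2) · ((1+|z|²)/Im z) · |φ(i)|. -/
open Complex

/-- The inverse Cayley transform maps the unit disk into the upper half plane. -/
lemma cayleyInv_im_pos {u : ℂ} (hu : ‖u‖ < 1) : 0 < (I * (1 + u) / (1 - u)).im := by
  have habs : ‖u‖ < 1 := hu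
  have hns : Complex.normSq u < 1 := by
    nlinarith [norm_nonneg u, Complex.sq_norm u, habs]
  have hd : (1 : ℂ) - u ≠ 0 := by
    intro h
    have : u = 1 := by linear_combination -h
    rw [this] at hu; norm_num at hu
  have hpos : 0 < Complex.normSq (1 - u) := Complex.normSq_pos.2 hd
  rw [Complex.div_im]
  have h1 : (I * (1 + u)).im = 1 + u.re := by simp
  have h2 : (I * (1 + u)).re = -u.im := by simp
  have h3 : ((1 : ℂ) - u).re = 1 - u.re := by simp
  have h4 : ((1 : ℂ) - u).im = -u.im := by simp
  rw [h1, h2, h3, h4, div_sub_div _ _ (ne_of_gt hpos) (ne_of_gt hpos)]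
  apply div_pos _ (by positivity)
  have h5 : Complex.normSq u = u.re ^ 2 + u.im ^ 2 := by
    simp [Complex.normSq_apply]; ring
  nlinarith [hns, hpos]

/-- The Möbius map `w ↦ (w-a)/(w-conj a)` maps the upper half plane into the unit disk. -/
lemma mob_norm_lt_one {a w : ℂ} (ha : 0 < a.im) (hw : 0 < w.im) :
    ‖(w - a) / (w - (starRingEnd ℂ) a)‖ < 1 := by
  have hden : w - (starRingEnd ℂ) a ≠ 0 := by
    intro h
    have : (w - (starRingEnd ℂ) a).im = 0 := by rw [h]; simp
    simp [Complex.sub_im, Complex.conj_im] at this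
    linarith
  rw [norm_div, div_lt_one (norm_pos_iff.2 hden)]
  have h1 : ‖w - a‖ ^ 2 = Complex.normSq (w - a) := by
    rw [Complex.sq_norm]
  have h2 : ‖w - (starRingEnd ℂ) a‖ ^ 2 = Complex.normSq (w - (starRingEnd ℂ) a) := by
    rw [Complex.sq_norm]
  have key : Complex.normSq (w - a) < Complex.normSq (w - (starRingEnd ℂ) a) := by
    simp only [Complex.normSq_apply, Complex.sub_re, Complex.sub_im, Complex.conj_re,
      Complex.conj_im]
    nlinarith [ha, hw]
  nlinarith [norm_nonneg (w - a), norm_nonneg (w - (starRingEnd ℂ) a)]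

set_option maxHeartbeats 1000000 in
/-- **Vladimirov's estimate** (single-variable case, with constant `(1+√2)/2`):
if `φ` is a holomorphic self-map of the upper half plane then
`|φ(z)| ≤ ((1+√2)/2)·((1+|z|²)/Im z)·|φ(i)|` for every `z` in the upper half plane. -/
theorem stmt2 (φ : ℂ → ℂ)
    (hφ : DifferentiableOn ℂ φ {z : ℂ | 0 < z.im})
    (hmap : ∀ z : ℂ, 0 < z.im → 0 < (φ z).im) :
    ∀ z : ℂ, 0 < z.im →
      ‖φ z‖ ≤ ((1 + Real.sqrt 2) / 2) * ((1 + ‖z‖ ^ 2) / z.im) * ‖φ Complex.I‖ := by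
  intro z hz
  set a : ℂ := φ I with ha_def
  have haim : 0 < a.im := hmap I (by simp)
  set cay : ℂ → ℂ := fun u => I * (1 + u) / (1 - u) with hcay_def
  set mob : ℂ → ℂ := fun w => (w - a) / (w - (starRingEnd ℂ) a) with hmob_def
  set g : ℂ → ℂ := fun u => mob (φ (cay u)) with hg_def
  have hcay_im : ∀ u ∈ Metric.ball (0 : ℂ) 1, 0 < (cay u).im := by
    intro u hu
    exact cayleyInv_im_pos (by simpa [Metric.mem_ball, dist_zero_right] using hu)
  have hmob_den : ∀ w : ℂ, 0 < w.im → w - (starRingEnd ℂ) a ≠ 0 := by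
    intro w hw h
    have : (w - (starRingEnd ℂ) a).im = 0 := by rw [h]; simp
    simp [Complex.sub_im, Complex.conj_im] at this
    linarith
  have hcay_diff : DifferentiableOn ℂ cay (Metric.ball (0 : ℂ) 1) := by
    apply DifferentiableOn.div
    · exact (differentiable_const _).differentiableOn.mul
        ((differentiable_const _).add differentiable_id).differentiableOn
    · exact ((differentiable_const _).sub differentiable_id).differentiableOn
    · intro u hu h
      have : u = 1 := by linear_combination -h
      rw [Metric.mem_ball, dist_zero_right, this] at hu
      norm_num at hu
  have hmob_diff : DifferentiableOn ℂ mob {w : ℂ | 0 < w.im} := by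
    apply DifferentiableOn.div
    · exact (differentiable_id.sub (differentiable_const _)).differentiableOn
    · exact (differentiable_id.sub (differentiable_const _)).differentiableOn
    · intro w hw; exact hmob_den w hw
  have hg_diff : DifferentiableOn ℂ g (Metric.ball (0 : ℂ) 1) := by
    apply DifferentiableOn.comp (hmob_diff.comp hφ ?_) hcay_diff ?_
    · intro w hw; exact hmap w hw
    · intro u hu; exact hcay_im u hu
  have hg_maps : Set.MapsTo g (Metric.ball (0 : ℂ) 1) (Metric.ball (0 : ℂ) 1) := by
    intro u hu
    rw [Metric.mem_ball, dist_zero_right]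
    exact mob_norm_lt_one haim (hmap _ (hcay_im u hu))
  have hg0 : g 0 = 0 := by
    have hcay0 : cay 0 = I := by simp [hcay_def]
    simp [hg_def, hcay0, hmob_def, ← ha_def]
  have hzI : z + I ≠ 0 := by
    intro h
    have : (z + I).im = 0 := by rw [h]; simp
    simp [Complex.add_im] at this
    linarith
  -- |z - I| < |z + I|
  have hMP : ‖z - I‖ < ‖z + I‖ := by
    have h1 : Complex.normSq (z - I) < Complex.normSq (z + I) := by
      simp only [Complex.normSq_apply, Complex.sub_re, Complex.sub_im, Complex.add_re,
        Complex.add_im, Complex.I_re, Complex.I_im]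
      nlinarith
    nlinarith [norm_nonneg (z - I), norm_nonneg (z + I),
      Complex.sq_norm (z - I), Complex.sq_norm (z + I)]
  set u0 : ℂ := (z - I) / (z + I) with hu0_def
  have hPpos : 0 < ‖z + I‖ := (norm_nonneg (z - I)).trans_lt hMP
  have hu0_lt : ‖u0‖ < 1 := by
    rw [hu0_def, norm_div, div_lt_one hPpos]
    exact hMP
  have hcayu0 : cay u0 = z := by
    rw [hcay_def]
    have h2I : (2 : ℂ) * I ≠ 0 := by simp [Complex.I_ne_zero]
    show I * (1 + u0) / (1 - u0) = z
    have e1 : 1 - u0 = 2 * I / (z + I) := by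
      rw [hu0_def, eq_div_iff hzI, sub_mul, div_mul_cancel₀ _ hzI]; ring
    have e2 : 1 + u0 = 2 * z / (z + I) := by
      rw [hu0_def, eq_div_iff hzI, add_mul, div_mul_cancel₀ _ hzI]; ring
    rw [e1, e2, mul_div_assoc', div_div_div_cancel_right₀ hzI, div_eq_iff h2I]
    ring
  have habs := Complex.norm_le_norm_of_mapsTo_ball hg_diff (hg_maps.mono_right Metric.ball_subset_closedBall) hg0 hu0_lt
  rw [show g u0 = mob (φ z) by rw [hg_def]; simp only []; rw [hcayu0]] at habs
  -- unpack the estimate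
  set w : ℂ := φ z with hw_def
  have hwim : 0 < w.im := hmap z hz
  have hden := hmob_den w hwim
  have hr : ‖w - a‖ * ‖z + I‖ ≤ ‖z - I‖ * ‖w - (starRingEnd ℂ) a‖ := by
    have h1 : ‖mob w‖ = ‖w - a‖ / ‖w - (starRingEnd ℂ) a‖ := by
      rw [hmob_def]; simp [map_div₀]
    have h2 : ‖u0‖ = ‖z - I‖ / ‖z + I‖ := by
      rw [hu0_def, norm_div]
    rw [h1, h2] at habs
    rw [div_le_div_iff₀ (norm_pos_iff.2 hden) hPpos] at habs
    linarith
  set P : ℝ := ‖z + I‖ with hP_def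
  set M : ℝ := ‖z - I‖ with hM_def
  have hconj : ‖(starRingEnd ℂ) a‖ = ‖a‖ := by simp
  have htri1 : ‖w‖ - ‖a‖ ≤ ‖w - a‖ := by
    have := norm_sub_norm_le w a; linarith
  have htri2 : ‖w - (starRingEnd ℂ) a‖ ≤ ‖w‖ + ‖a‖ := by
    calc ‖w - (starRingEnd ℂ) a‖ ≤ ‖w‖ + ‖(starRingEnd ℂ) a‖ := norm_sub_le _ _
    _ = ‖w‖ + ‖a‖ := by rw [hconj]
  have hkey : ‖w‖ * (P - M) ≤ (P + M) * ‖a‖ := by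
    nlinarith [hr, htri1, htri2, norm_nonneg w, norm_nonneg a, hMP, hPpos,
      norm_nonneg (z - I)]
  -- P² - M² = 4 Im z and (P+M)² ≤ 4(1+‖z‖²)
  have hP2 : P ^ 2 = ‖z‖ ^ 2 + 2 * z.im + 1 := by
    rw [hP_def, Complex.sq_norm, Complex.normSq_apply]
    have : ‖z‖ ^ 2 = Complex.normSq z := by rw [Complex.sq_norm]
    rw [this, Complex.normSq_apply]
    simp [Complex.add_re, Complex.add_im]
    ring
  have hM2 : M ^ 2 = ‖z‖ ^ 2 - 2 * z.im + 1 := by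
    rw [hM_def, Complex.sq_norm, Complex.normSq_apply]
    have : ‖z‖ ^ 2 = Complex.normSq z := by rw [Complex.sq_norm]
    rw [this, Complex.normSq_apply]
    simp [Complex.sub_re, Complex.sub_im]
    ring
  have hMnn : 0 ≤ M := norm_nonneg _
  -- ‖w‖ ≤ ((1+‖z‖²)/Im z) ‖a‖
  have hmain : ‖w‖ * z.im ≤ (1 + ‖z‖ ^ 2) * ‖a‖ := by
    nlinarith [hkey, hP2, hM2, hMnn, hPpos, hMP, norm_nonneg w, norm_nonneg a,
      sq_nonneg (P - M), sq_nonneg (P + M), mul_pos (sub_pos.2 hMP) hPpos]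
  have hsqrt : (1 : ℝ) ≤ Real.sqrt 2 := by
    rw [show (1:ℝ) = Real.sqrt 1 by simp]
    exact Real.sqrt_le_sqrt (by norm_num)
  have hfac : (1 : ℝ) ≤ (1 + Real.sqrt 2) / 2 := by linarith
  have h1z : (0:ℝ) < 1 + ‖z‖ ^ 2 := by positivity
  calc ‖w‖ ≤ (1 + ‖z‖ ^ 2) / z.im * ‖a‖ := by
        rw [div_mul_eq_mul_div, le_div_iff₀ hz]; linarith
    _ ≤ ((1 + Real.sqrt 2) / 2) * ((1 + ‖z‖ ^ 2) / z.im) * ‖a‖ := by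
        have hnn : 0 ≤ (1 + ‖z‖ ^ 2) / z.im * ‖a‖ := by positivity
        nlinarith [hfac, hnn]
end

section
/- Let φ be holomorphic on ℂ∖ℝ and suppose there exist a finite complex Borel measure λ on ℝ and a complex number λ∞ such that φ(w) = (φ(i)+φ(−i))/2 + λ∞·w + ∫_ℝ (1+s·w)/(s−w) dλ(s) for all w ∈ ℂ∖ℝ. Then sup_{z∈ℂ∖ℝ} (|Im z|/(1+|z|²))·|φ(z)| < ∞. -/
open MeasureTheory Filter Topology

lemma stmt3_key (s : ℝ) (z : ℂ) :
    |z.im| * ‖1 + (s : ℂ) * z‖ ≤ (1 + ‖z‖ ^ 2) * ‖(s : ℂ) - z‖ := by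
  set x := z.re
  set y := z.im
  have hA : ‖1 + (s : ℂ) * z‖ ^ 2 = (1 + s * x) ^ 2 + (s * y) ^ 2 := by
    rw [Complex.sq_norm, Complex.normSq_apply]
    simp [Complex.add_re, Complex.add_im, Complex.mul_re, Complex.mul_im]
    ring
  have hB : ‖(s : ℂ) - z‖ ^ 2 = (s - x) ^ 2 + y ^ 2 := by
    rw [Complex.sq_norm, Complex.normSq_apply]
    simp [Complex.sub_re, Complex.sub_im]
    ring
  have hN : ‖z‖ ^ 2 = x ^ 2 + y ^ 2 := by
    rw [Complex.sq_norm, Complex.normSq_apply]; ring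
  have h2 : (|y| * ‖1 + (s : ℂ) * z‖) ^ 2 ≤ ((1 + ‖z‖ ^ 2) * ‖(s : ℂ) - z‖) ^ 2 := by
    rw [mul_pow, mul_pow, sq_abs, hA, hB, hN]
    have hA' : (1 + s * x) ^ 2 + (s * y) ^ 2 ≤ (1 + s ^ 2) * (1 + x ^ 2 + y ^ 2) := by
      nlinarith [sq_nonneg (s - x), sq_nonneg y]
    have hB' : (1 + s ^ 2) * y ^ 2 ≤ (1 + x ^ 2 + y ^ 2) * ((s - x) ^ 2 + y ^ 2) := by
      nlinarith [sq_nonneg ((1 + x ^ 2) * s - x * (1 + x ^ 2 + y ^ 2)), sq_nonneg (y ^ 2),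
        sq_nonneg x, sq_nonneg y]
    nlinarith [sq_nonneg y, sq_nonneg (1 + x ^ 2 + y ^ 2),
      mul_le_mul_of_nonneg_left hA' (sq_nonneg y),
      mul_le_mul_of_nonneg_left hB' (by positivity : (0:ℝ) ≤ 1 + x ^ 2 + y ^ 2)]
  have h1 : (0:ℝ) ≤ |y| * ‖1 + (s : ℂ) * z‖ := by positivity
  have h3 : (0:ℝ) ≤ (1 + ‖z‖ ^ 2) * ‖(s : ℂ) - z‖ := by positivity
  nlinarith [h2, h1, h3]

lemma stmt3_ptwise (s : ℝ) (z : ℂ) (hz : z.im ≠ 0) (g : ℝ → ℂ) :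
    |z.im| / (1 + ‖z‖ ^ 2) * ‖((1 + (s : ℂ) * z) / ((s : ℂ) - z)) * g s‖ ≤ ‖g s‖ := by
  have hBne : (s : ℂ) - z ≠ 0 := by
    intro h
    have : ((s : ℂ) - z).im = 0 := by rw [h]; simp
    simp [Complex.sub_im] at this
    exact hz this
  have hBpos : (0:ℝ) < ‖(s : ℂ) - z‖ := norm_pos_iff.mpr hBne
  have hNpos : (0:ℝ) < 1 + ‖z‖ ^ 2 := by positivity
  rw [norm_mul, norm_div]
  have h1 : |z.im| / (1 + ‖z‖ ^ 2) * (‖1 + (s : ℂ) * z‖ / ‖(s : ℂ) - z‖) ≤ 1 := by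
    rw [div_mul_div_comm]
    exact div_le_one (by positivity) |>.mpr (stmt3_key s z)
  calc |z.im| / (1 + ‖z‖ ^ 2) * (‖1 + (s : ℂ) * z‖ / ‖(s : ℂ) - z‖ * ‖g s‖)
      = (|z.im| / (1 + ‖z‖ ^ 2) * (‖1 + (s : ℂ) * z‖ / ‖(s : ℂ) - z‖)) * ‖g s‖ := by ring
    _ ≤ 1 * ‖g s‖ := mul_le_mul_of_nonneg_right h1 (norm_nonneg _)
    _ = ‖g s‖ := one_mul _

/-- **Global simple behavior of functions admitting a representing measure.**
If a holomorphic function `φ` on `ℂ∖ℝ` admits a representing measure (encoded as a finite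
positive measure `μ` with integrable complex density `g`, plus the atomic mass `lam` at `∞`),
then `(|Im z|/(1+|z|²))·|φ(z)|` is bounded on `ℂ∖ℝ`. -/
theorem stmt3 (φ : ℂ → ℂ)
    (hφ : DifferentiableOn ℂ φ {z : ℂ | z.im ≠ 0})
    (μ : Measure ℝ) [IsFiniteMeasure μ] (g : ℝ → ℂ) (hg : Integrable g μ) (lam : ℂ)
    (hrep : ∀ w : ℂ, w.im ≠ 0 →
      φ w = (φ Complex.I + φ (-Complex.I)) / 2 + lam * w
        + ∫ s, ((1 + (s : ℂ) * w) / ((s : ℂ) - w)) * g s ∂μ) :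
    ∃ C : ℝ, ∀ z : ℂ, z.im ≠ 0 → (|z.im| / (1 + ‖z‖ ^ 2)) * ‖φ z‖ ≤ C := by
  set c : ℂ := (φ Complex.I + φ (-Complex.I)) / 2 with hc
  refine ⟨‖c‖ + ‖lam‖ + ∫ s, ‖g s‖ ∂μ, fun z hz => ?_⟩
  have hNpos : (0:ℝ) < 1 + ‖z‖ ^ 2 := by positivity
  set M : ℝ := |z.im| / (1 + ‖z‖ ^ 2) with hM
  have hM0 : 0 ≤ M := by positivity
  have hM1 : M ≤ 1 := by
    rw [hM, div_le_one hNpos]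
    have : |z.im| ≤ ‖z‖ := Complex.abs_im_le_norm z
    nlinarith [norm_nonneg z, sq_nonneg (1 - ‖z‖)]
  have hMz : M * ‖z‖ ≤ 1 := by
    rw [hM, div_mul_eq_mul_div, div_le_one hNpos]
    have h1 : |z.im| ≤ ‖z‖ := Complex.abs_im_le_norm z
    nlinarith [norm_nonneg z]
  rw [hrep z hz]
  have htri : ‖c + lam * z + ∫ s, ((1 + (s : ℂ) * z) / ((s : ℂ) - z)) * g s ∂μ‖
      ≤ ‖c‖ + ‖lam‖ * ‖z‖ + ‖∫ s, ((1 + (s : ℂ) * z) / ((s : ℂ) - z)) * g s ∂μ‖ := by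
    refine le_trans (norm_add_le _ _) ?_
    gcongr
    refine le_trans (norm_add_le _ _) ?_
    rw [norm_mul]
  have hint : M * ‖∫ s, ((1 + (s : ℂ) * z) / ((s : ℂ) - z)) * g s ∂μ‖ ≤ ∫ s, ‖g s‖ ∂μ := by
    calc M * ‖∫ s, ((1 + (s : ℂ) * z) / ((s : ℂ) - z)) * g s ∂μ‖
        ≤ M * ∫ s, ‖((1 + (s : ℂ) * z) / ((s : ℂ) - z)) * g s‖ ∂μ :=
          mul_le_mul_of_nonneg_left (norm_integral_le_integral_norm _) hM0
      _ = ∫ s, M * ‖((1 + (s : ℂ) * z) / ((s : ℂ) - z)) * g s‖ ∂μ :=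
          (MeasureTheory.integral_const_mul _ _).symm
      _ ≤ ∫ s, ‖g s‖ ∂μ := by
          refine integral_mono_of_nonneg (ae_of_all _ fun s => by positivity) hg.norm
            (ae_of_all _ fun s => ?_)
          exact stmt3_ptwise s z hz g
  calc M * ‖c + lam * z + ∫ s, ((1 + (s : ℂ) * z) / ((s : ℂ) - z)) * g s ∂μ‖
      ≤ M * (‖c‖ + ‖lam‖ * ‖z‖ + ‖∫ s, ((1 + (s : ℂ) * z) / ((s : ℂ) - z)) * g s ∂μ‖) :=
        mul_le_mul_of_nonneg_left htri hM0
    _ = M * ‖c‖ + ‖lam‖ * (M * ‖z‖)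
        + M * ‖∫ s, ((1 + (s : ℂ) * z) / ((s : ℂ) - z)) * g s ∂μ‖ := by ring
    _ ≤ ‖c‖ + ‖lam‖ + ∫ s, ‖g s‖ ∂μ := by
        have h1 : M * ‖c‖ ≤ ‖c‖ := by
          calc M * ‖c‖ ≤ 1 * ‖c‖ := mul_le_mul_of_nonneg_right hM1 (norm_nonneg _)
            _ = ‖c‖ := one_mul _
        have h2 : ‖lam‖ * (M * ‖z‖) ≤ ‖lam‖ := by
          calc ‖lam‖ * (M * ‖z‖) ≤ ‖lam‖ * 1 := mul_le_mul_of_nonneg_left hMz (norm_nonneg _)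
            _ = ‖lam‖ := mul_one _
        exact add_le_add (add_le_add h1 h2) hint
end

section
/- Let φ be holomorphic on ℂ∖ℝ and suppose there exist a finite complex Borel measure λ on ℝ and λ∞ ∈ ℂ with φ(w) = (φ(i)+φ(−i))/2 + λ∞·w + ∫_ℝ (1+s·w)/(s−w) dλ(s) for all w ∈ ℂ∖ℝ. Then for every x ∈ ℝ, lim_{y→0, y≠0} y·φ(x+iy) = i·(1+x²)·λ({x}) (a two-sided limit in real y), and lim_{y→+∞} φ(iy)/y = i·λ∞. -/
open MeasureTheory Filter Topology

lemma sub_w_ne {s : ℝ} {w : ℂ} (hw : w.im ≠ 0) : (s : ℂ) - w ≠ 0 := by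
  intro h
  apply hw
  have := congrArg Complex.im h
  simpa [neg_eq_zero] using this

lemma im_le_norm_sub (s : ℝ) (w : ℂ) : |w.im| ≤ ‖(s : ℂ) - w‖ := by
  have h := Complex.abs_im_le_norm ((s : ℂ) - w)
  simpa [abs_neg] using h

lemma kernel_int {μ : Measure ℝ} {g : ℝ → ℂ}
    (hg : Integrable g μ) {w : ℂ} (hw : w.im ≠ 0) :
    Integrable (fun s : ℝ => g s / ((s : ℂ) - w)) μ := by
  have h : Integrable (fun s : ℝ => ((s : ℂ) - w)⁻¹ * g s) μ := by
    apply hg.bdd_mul (c := |w.im|⁻¹)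
    · exact ((Complex.continuous_ofReal.sub continuous_const).inv₀
        fun s => sub_w_ne hw).aestronglyMeasurable
    · refine ae_of_all _ fun s => ?_
      rw [norm_inv]
      exact inv_anti₀ (abs_pos.mpr hw) (im_le_norm_sub s w)
  simpa [div_eq_mul_inv, mul_comm] using h

lemma rep' (φ : ℂ → ℂ) (μ : Measure ℝ) [IsFiniteMeasure μ] (g : ℝ → ℂ)
    (hg : Integrable g μ) (lam : ℂ)
    (hrep : ∀ w : ℂ, w.im ≠ 0 →
      φ w = (φ Complex.I + φ (-Complex.I)) / 2 + lam * w
        + ∫ s, ((1 + (s : ℂ) * w) / ((s : ℂ) - w)) * g s ∂μ) :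
    ∀ w : ℂ, w.im ≠ 0 →
      φ w = (φ Complex.I + φ (-Complex.I)) / 2 + (lam + ∫ s, g s ∂μ) * w
        + (1 + w ^ 2) * ∫ s, g s / ((s : ℂ) - w) ∂μ := by
  intro w hw
  rw [hrep w hw]
  have hker : ∀ s : ℝ, ((1 + (s : ℂ) * w) / ((s : ℂ) - w)) * g s
      = w * g s + (1 + w ^ 2) * (g s / ((s : ℂ) - w)) := by
    intro s
    have hne : (s : ℂ) - w ≠ 0 := sub_w_ne hw
    field_simp
    ring
  have h1 : Integrable (fun s : ℝ => w * g s) μ := hg.const_mul w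
  have h2 : Integrable (fun s : ℝ => (1 + w ^ 2) * (g s / ((s : ℂ) - w))) μ :=
    (kernel_int hg hw).const_mul _
  calc (φ Complex.I + φ (-Complex.I)) / 2 + lam * w
        + ∫ s, ((1 + (s : ℂ) * w) / ((s : ℂ) - w)) * g s ∂μ
      = (φ Complex.I + φ (-Complex.I)) / 2 + lam * w
        + ∫ s, (w * g s + (1 + w ^ 2) * (g s / ((s : ℂ) - w))) ∂μ := by
        simp only [hker]
    _ = (φ Complex.I + φ (-Complex.I)) / 2 + lam * w
        + (w * ∫ s, g s ∂μ + (1 + w ^ 2) * ∫ s, g s / ((s : ℂ) - w) ∂μ) := by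
        rw [integral_add h1 h2, integral_const_mul, integral_const_mul]
    _ = (φ Complex.I + φ (-Complex.I)) / 2 + (lam + ∫ s, g s ∂μ) * w
        + (1 + w ^ 2) * ∫ s, g s / ((s : ℂ) - w) ∂μ := by ring

/-- **Atomic masses from boundary limits** (Lemma `mass`).
If `φ` admits the representing measure encoded by `(μ, g)` with atomic mass `lam` at `∞`,
then `y·φ(x+iy) → i(1+x²)·λ({x})` as real `y → 0`, `y ≠ 0`, and `φ(iy)/y → i·λ∞` as
`y → +∞`; the atomic mass of the complex measure at `x` is `∫_{x} g dμ`. -/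
theorem stmt14 (φ : ℂ → ℂ) (hφ : DifferentiableOn ℂ φ {z : ℂ | z.im ≠ 0})
    (μ : Measure ℝ) [IsFiniteMeasure μ] (g : ℝ → ℂ) (hg : Integrable g μ) (lam : ℂ)
    (hrep : ∀ w : ℂ, w.im ≠ 0 →
      φ w = (φ Complex.I + φ (-Complex.I)) / 2 + lam * w
        + ∫ s, ((1 + (s : ℂ) * w) / ((s : ℂ) - w)) * g s ∂μ) :
    (∀ x : ℝ,
      Tendsto (fun y : ℝ => (y : ℂ) * φ ((x : ℂ) + (y : ℂ) * Complex.I))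
        (𝓝[≠] (0 : ℝ))
        (𝓝 (Complex.I * (1 + (x : ℂ) ^ 2) * ∫ s in ({x} : Set ℝ), g s ∂μ)))
    ∧
    Tendsto (fun y : ℝ => φ (Complex.I * (y : ℂ)) / (y : ℂ)) atTop
      (𝓝 (Complex.I * lam)) := by
  have hrep' := rep' φ μ g hg lam hrep
  set c : ℂ := (φ Complex.I + φ (-Complex.I)) / 2 with hc
  set G : ℂ := ∫ s, g s ∂μ with hG
  constructor
  · -- part 1
    intro x
    set w : ℝ → ℂ := fun y => (x : ℂ) + (y : ℂ) * Complex.I with hwdef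
    have hwim : ∀ y : ℝ, (w y).im = y := by intro y; simp [hwdef]
    have hI : Tendsto (fun y : ℝ => ∫ s, (y : ℂ) * (g s / ((s : ℂ) - w y)) ∂μ)
        (𝓝[≠] (0 : ℝ))
        (𝓝 (∫ s, Set.indicator ({x} : Set ℝ) (fun s => Complex.I * g s) s ∂μ)) := by
      apply tendsto_integral_filter_of_dominated_convergence (fun s => ‖g s‖)
      · filter_upwards [self_mem_nhdsWithin] with y (hy : y ≠ 0)
        have hwim' : (w y).im ≠ 0 := by rw [hwim]; exact hy
        have hm : AEStronglyMeasurable (fun s : ℝ => ((s : ℂ) - w y)⁻¹ * ((y:ℂ) * g s)) μ := by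
          apply AEStronglyMeasurable.mul
          · exact ((Complex.continuous_ofReal.sub continuous_const).inv₀
              fun s => sub_w_ne hwim').aestronglyMeasurable
          · exact (hg.const_mul _).aestronglyMeasurable
        apply hm.congr
        filter_upwards with s
        rw [div_eq_mul_inv]; ring
      · filter_upwards [self_mem_nhdsWithin] with y (hy : y ≠ 0)
        filter_upwards with s
        have h1 : |y| ≤ ‖(s : ℂ) - w y‖ := by
          have := im_le_norm_sub s (w y); rwa [hwim] at this
        have h2 : (0:ℝ) < |y| := abs_pos.mpr hy
        rw [norm_mul, norm_div, Complex.norm_real, Real.norm_eq_abs]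
        calc |y| * (‖g s‖ / ‖(s : ℂ) - w y‖)
            ≤ |y| * (‖g s‖ / |y|) := by gcongr
          _ = ‖g s‖ := by field_simp
      · exact hg.norm
      · filter_upwards with s
        by_cases hs : s = x
        · subst hs
          have hind : Set.indicator ({s} : Set ℝ) (fun t => Complex.I * g t) s
              = Complex.I * g s := by simp
          rw [hind]
          apply Tendsto.congr' _ tendsto_const_nhds
          filter_upwards [self_mem_nhdsWithin] with y (hy : y ≠ 0)
          have hsw : (s : ℂ) - w y = -((y:ℂ) * Complex.I) := by rw [hwdef]; ring
          rw [hsw]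
          have hyc : (y : ℂ) ≠ 0 := Complex.ofReal_ne_zero.mpr hy
          have hs2 : (y:ℂ) / -((y:ℂ) * Complex.I) = Complex.I := by
            rw [div_neg, ← div_div, div_self hyc, one_div, Complex.inv_I, neg_neg]
          have hs3 : (y:ℂ) * (g s / -((y:ℂ) * Complex.I))
              = g s * ((y:ℂ) / -((y:ℂ) * Complex.I)) := by ring
          rw [hs3, hs2, mul_comm]
        · have hs' : s ∉ ({x} : Set ℝ) := by simpa using hs
          rw [Set.indicator_of_notMem hs']
          have hw0 : w 0 = (x : ℂ) := by simp [hwdef]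
          have hne : (s : ℂ) - (x : ℂ) ≠ 0 := sub_ne_zero.mpr (by exact_mod_cast hs)
          have hcw : Continuous w :=
            continuous_const.add (Complex.continuous_ofReal.mul continuous_const)
          have ht : Tendsto (fun y : ℝ => (y : ℂ) * (g s / ((s : ℂ) - w y))) (𝓝 0)
              (𝓝 ((0:ℂ) * (g s / ((s : ℂ) - (x : ℂ))))) := by
            apply Tendsto.mul
            · simpa using Complex.continuous_ofReal.tendsto 0
            · exact tendsto_const_nhds.div
                (tendsto_const_nhds.sub (by simpa [hw0] using hcw.tendsto 0)) hne
          simpa using ht.mono_left nhdsWithin_le_nhds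
    -- assemble part 1
    have hindint : (∫ s, Set.indicator ({x} : Set ℝ) (fun s => Complex.I * g s) s ∂μ)
        = Complex.I * ∫ s in ({x} : Set ℝ), g s ∂μ := by
      rw [integral_indicator (measurableSet_singleton x), integral_const_mul]
    have hmain : Tendsto
        (fun y : ℝ => (y:ℂ) * c + (lam + G) * ((y:ℂ) * w y)
          + (1 + (w y) ^ 2) * ∫ s, (y : ℂ) * (g s / ((s : ℂ) - w y)) ∂μ)
        (𝓝[≠] (0 : ℝ))
        (𝓝 (Complex.I * (1 + (x : ℂ) ^ 2) * ∫ s in ({x} : Set ℝ), g s ∂μ)) := by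
      have h1 : Tendsto (fun y : ℝ => (y:ℂ) * c) (𝓝[≠] (0:ℝ)) (𝓝 0) := by
        have : Tendsto (fun y : ℝ => (y:ℂ) * c) (𝓝 (0:ℝ)) (𝓝 ((0:ℂ) * c)) :=
          (Complex.continuous_ofReal.tendsto 0).mul tendsto_const_nhds
        simpa using this.mono_left nhdsWithin_le_nhds
      have h2 : Tendsto (fun y : ℝ => (lam + G) * ((y:ℂ) * w y)) (𝓝[≠] (0:ℝ)) (𝓝 0) := by
        have hcw : Continuous w :=
          continuous_const.add (Complex.continuous_ofReal.mul continuous_const)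
        have : Tendsto (fun y : ℝ => (lam + G) * ((y:ℂ) * w y)) (𝓝 (0:ℝ))
            (𝓝 ((lam + G) * ((0:ℂ) * w 0))) :=
          tendsto_const_nhds.mul ((Complex.continuous_ofReal.tendsto 0).mul (hcw.tendsto 0))
        simpa using this.mono_left nhdsWithin_le_nhds
      have h3 : Tendsto (fun y : ℝ =>
          (1 + (w y) ^ 2) * ∫ s, (y : ℂ) * (g s / ((s : ℂ) - w y)) ∂μ) (𝓝[≠] (0:ℝ))
          (𝓝 ((1 + (x:ℂ) ^ 2) * (Complex.I * ∫ s in ({x} : Set ℝ), g s ∂μ))) := by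
        have hcw : Continuous w :=
          continuous_const.add (Complex.continuous_ofReal.mul continuous_const)
        have hw0 : w 0 = (x : ℂ) := by simp [hwdef]
        have hq : Tendsto (fun y : ℝ => 1 + (w y) ^ 2) (𝓝[≠] (0:ℝ)) (𝓝 (1 + (x:ℂ)^2)) := by
          have : Tendsto (fun y : ℝ => 1 + (w y) ^ 2) (𝓝 (0:ℝ)) (𝓝 (1 + (w 0)^2)) :=
            tendsto_const_nhds.add ((hcw.tendsto 0).pow 2)
          simpa [hw0] using this.mono_left nhdsWithin_le_nhds
        rw [hindint] at hI
        exact hq.mul hI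
      have := (h1.add h2).add h3
      rw [show Complex.I * (1 + (x:ℂ) ^ 2) * (∫ s in ({x} : Set ℝ), g s ∂μ)
        = 0 + 0 + ((1 + (x:ℂ) ^ 2) * (Complex.I * ∫ s in ({x} : Set ℝ), g s ∂μ)) by ring]
      exact this
    apply hmain.congr'
    filter_upwards [self_mem_nhdsWithin] with y (hy : y ≠ 0)
    have hwim' : (w y).im ≠ 0 := by rw [hwim]; exact hy
    rw [show (x:ℂ) + (y:ℂ) * Complex.I = w y from rfl, hrep' (w y) hwim',
      integral_const_mul]
    ring
  · -- part 2
    set w : ℝ → ℂ := fun y => Complex.I * (y : ℂ) with hwdef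
    have hwim : ∀ y : ℝ, (w y).im = y := by intro y; simp [hwdef]
    have hJ : Tendsto (fun y : ℝ => ∫ s, ((1 - (y:ℂ)^2) / (y:ℂ)) * (g s / ((s : ℂ) - w y)) ∂μ)
        atTop (𝓝 (∫ s, -Complex.I * g s ∂μ)) := by
      apply tendsto_integral_filter_of_dominated_convergence (fun s => 2 * ‖g s‖)
      · filter_upwards [eventually_ge_atTop (1:ℝ)] with y hy
        have hy0 : y ≠ 0 := by linarith
        have hwim' : (w y).im ≠ 0 := by rw [hwim]; exact hy0
        have hm : AEStronglyMeasurable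
            (fun s : ℝ => ((s : ℂ) - w y)⁻¹ * (((1 - (y:ℂ)^2) / (y:ℂ)) * g s)) μ := by
          apply AEStronglyMeasurable.mul
          · exact ((Complex.continuous_ofReal.sub continuous_const).inv₀
              fun s => sub_w_ne hwim').aestronglyMeasurable
          · exact (hg.const_mul _).aestronglyMeasurable
        apply hm.congr
        filter_upwards with s
        rw [div_eq_mul_inv (g s)]; ring
      · filter_upwards [eventually_ge_atTop (1:ℝ)] with y hy
        filter_upwards with s
        have hy0 : (0:ℝ) < y := by linarith
        have h1 : y ≤ ‖(s : ℂ) - w y‖ := by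
          have := im_le_norm_sub s (w y)
          rwa [hwim, abs_of_pos hy0] at this
        rw [norm_mul, norm_div, norm_div, Complex.norm_real, Real.norm_eq_abs,
          abs_of_pos hy0]
        have hb : ‖(1 : ℂ) - (y:ℂ)^2‖ ≤ 1 + y^2 := by
          calc ‖(1 : ℂ) - (y:ℂ)^2‖ ≤ ‖(1:ℂ)‖ + ‖(y:ℂ)^2‖ := norm_sub_le _ _
            _ = 1 + y^2 := by
                rw [norm_one, norm_pow, Complex.norm_real, Real.norm_eq_abs, sq_abs]
        calc ‖(1:ℂ) - (y:ℂ)^2‖ / y * (‖g s‖ / ‖(s : ℂ) - w y‖)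
            ≤ (1 + y^2) / y * (‖g s‖ / y) := by gcongr
          _ = (1 + y^2) / y^2 * ‖g s‖ := by ring
          _ ≤ 2 * ‖g s‖ := by
              apply mul_le_mul_of_nonneg_right _ (norm_nonneg _)
              rw [div_le_iff₀ (by positivity)]
              nlinarith
      · exact hg.norm.const_mul 2
      · filter_upwards with s
        have key : Tendsto (fun y : ℝ => ((1 - (y:ℂ)^2) / (y:ℂ)) * ((1:ℂ) / ((s : ℂ) - w y)))
            atTop (𝓝 (-Complex.I)) := by
          have heq : (fun y : ℝ => ((1 - (y:ℂ)^2) / (y:ℂ)) * ((1:ℂ) / ((s : ℂ) - w y)))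
              =ᶠ[atTop] (fun y : ℝ => (1 / (y:ℂ)^2 - 1) / ((s:ℂ) / (y:ℂ) - Complex.I)) := by
            filter_upwards [eventually_ge_atTop (1:ℝ)] with y hy
            have hy0 : (y:ℂ) ≠ 0 := Complex.ofReal_ne_zero.mpr (by linarith)
            have hne : (s : ℂ) - w y ≠ 0 := sub_w_ne (by rw [hwim]; linarith)
            show ((1 - (y:ℂ)^2) / (y:ℂ)) * ((1:ℂ) / ((s : ℂ) - w y))
                = (1 / (y:ℂ)^2 - 1) / ((s:ℂ) / (y:ℂ) - Complex.I)
            have hne' : (s : ℂ) - Complex.I * (y:ℂ) ≠ 0 := by simpa [hwdef] using hne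
            have hden : (s:ℂ)/(y:ℂ) - Complex.I ≠ 0 := by
              have e : (s:ℂ)/(y:ℂ) - Complex.I = ((s:ℂ) - Complex.I*(y:ℂ))/(y:ℂ) := by
                field_simp
              rw [e]
              exact div_ne_zero hne' hy0
            rw [hwdef]
            rw [eq_div_iff hden]
            field_simp
            exact mul_div_cancel_right₀ _ (by rwa [mul_comm] at hne')

          rw [show (-Complex.I : ℂ) = ((0:ℂ) - 1) / ((0:ℂ) - Complex.I) by
            rw [zero_sub, zero_sub, neg_div_neg_eq, one_div, Complex.inv_I]]
          apply Tendsto.congr' heq.symm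
          apply Tendsto.div
          · apply Tendsto.sub _ tendsto_const_nhds
            have h0 : Tendsto (fun y : ℝ => (y ^ 2)⁻¹) atTop (𝓝 (0:ℝ)) :=
              Tendsto.comp tendsto_inv_atTop_zero (tendsto_pow_atTop two_ne_zero)
            have h1 := (Complex.continuous_ofReal.tendsto 0).comp h0
            apply Tendsto.congr ?_ (by simpa using h1)
            intro y
            simp [Function.comp, one_div]
          · apply Tendsto.sub _ tendsto_const_nhds
            have h0 : Tendsto (fun y : ℝ => s / y) atTop (𝓝 (0:ℝ)) := by
              simpa [div_eq_mul_inv] using tendsto_inv_atTop_zero.const_mul s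
            have h1 := (Complex.continuous_ofReal.tendsto 0).comp h0
            apply Tendsto.congr ?_ (by simpa using h1)
            intro y
            simp [Function.comp]
          · rw [zero_sub, neg_ne_zero]; exact Complex.I_ne_zero
        have h2 := key.mul_const (g s)
        apply Tendsto.congr _ h2
        intro y
        ring
    -- assemble part 2
    have hJ' : Tendsto (fun y : ℝ => ((1 - (y:ℂ)^2) / (y:ℂ))
        * ∫ s, g s / ((s : ℂ) - w y) ∂μ) atTop (𝓝 (-Complex.I * G)) := by
      rw [show -Complex.I * G = ∫ s, -Complex.I * g s ∂μ by rw [integral_const_mul]]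
      apply Tendsto.congr _ hJ
      intro y
      rw [← integral_const_mul]
    have h1 : Tendsto (fun y : ℝ => c * ((y:ℂ))⁻¹) atTop (𝓝 0) := by
      have h0 := (Complex.continuous_ofReal.tendsto 0).comp tendsto_inv_atTop_zero
      have h0' : Tendsto (fun y : ℝ => ((y:ℂ))⁻¹) atTop (𝓝 0) := by
        apply Tendsto.congr ?_ (by simpa using h0)
        intro y
        simp [Function.comp]
      simpa using h0'.const_mul c
    have hsum := (h1.add (tendsto_const_nhds (x := (lam + G) * Complex.I))).add hJ'
    rw [show Complex.I * lam = 0 + (lam + G) * Complex.I + (-Complex.I * G) by ring]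
    apply hsum.congr'
    filter_upwards [eventually_ge_atTop (1:ℝ)] with y hy
    have hy0 : y ≠ 0 := by linarith
    have hyc : (y:ℂ) ≠ 0 := Complex.ofReal_ne_zero.mpr hy0
    have hwim' : (w y).im ≠ 0 := by rw [hwim]; exact hy0
    rw [show Complex.I * (y:ℂ) = w y from rfl, hrep' (w y) hwim']
    have h2 : (1:ℂ) + (w y)^2 = 1 - (y:ℂ)^2 := by
      rw [hwdef]
      simp only [mul_pow, Complex.I_sq]
      ring
    rw [h2]
    field_simp
    ring
end

section
/- Let φ be holomorphic on ℂ∖ℝ and suppose there exist a finite complex Borel measure λ on ℝ and λ∞ ∈ ℂ with φ(w) = (φ(i)+φ(−i))/2 + λ∞·w + ∫_ℝ (1+s·w)/(s−w) dλ(s) for all w ∈ ℂ∖ℝ. Then for each y > 0 the function x ↦ (φ(x+iy) − φ(x−iy))/(1+x²) is continuous and absolutely integrable on ℝ, with ∫_{−∞}^{∞} |φ(x+iy) − φ(x−iy)|/(1+x²) dx ≤ 2π·y·(|λ|(ℝ) + |λ∞|) + 2π·|λ|(ℝ), and ∫_{−∞}^{∞} (φ(x+iy) − φ(x−iy))/(1+x²)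 dx = 2πi·λ∞·y + 2πi·(y+1)·∫_ℝ (s²+1)/(s²+(y+1)²) dλ(s), where |λ| denotes the total variation measure of λ. -/
open MeasureTheory Filter Topology

open Real


lemma kerpos (y : ℝ) (hy : 0 < y) (s x : ℝ) : 0 < ((x - s) ^ 2 + y ^ 2) * (x ^ 2 + 1) :=
  mul_pos (by positivity) (by positivity)

lemma keyintegrable (y : ℝ) (hy : 0 < y) (s : ℝ) :
    Integrable (fun x : ℝ => (((x - s) ^ 2 + y ^ 2) * (x ^ 2 + 1))⁻¹) := by
  have hc : Continuous (fun x : ℝ => (((x - s) ^ 2 + y ^ 2) * (x ^ 2 + 1))⁻¹) := by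
    apply Continuous.inv₀ (by continuity)
    intro x; exact (kerpos y hy s x).ne'
  refine (integrable_inv_one_add_sq.const_mul (y ^ 2)⁻¹).mono' hc.aestronglyMeasurable ?_
  filter_upwards with x
  rw [Real.norm_eq_abs, abs_of_pos (inv_pos.2 (kerpos y hy s x)), ← mul_inv]
  apply inv_anti₀ (by positivity)
  have : y ^ 2 * (1 + x ^ 2) ≤ ((x - s) ^ 2 + y ^ 2) * (x ^ 2 + 1) := by nlinarith [sq_nonneg (x - s), sq_nonneg x]
  linarith

lemma inv_atBot_zero : Tendsto (fun x : ℝ => x⁻¹) atBot (𝓝 (0:ℝ)) := by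
  have h := (tendsto_inv_atTop_zero (𝕜 := ℝ)).comp tendsto_neg_atBot_atTop
  have h2 : Tendsto (fun x : ℝ => -(x⁻¹)) atBot (𝓝 (0:ℝ)) := by
    refine h.congr fun x => ?_
    simp [Function.comp, inv_neg]
  simpa using h2.neg

lemma tendsto_lin_div (a b : ℝ) (l : Filter ℝ) (h0 : Tendsto (fun x : ℝ => x⁻¹) l (𝓝 0))
    (hne : ∀ᶠ x in l, x ≠ 0) :
    Tendsto (fun x : ℝ => (a * x + b) / (x ^ 2 + 1)) l (𝓝 0) := by
  have hnum : Tendsto (fun x : ℝ => a * x⁻¹ + b * (x⁻¹ * x⁻¹)) l (𝓝 0) := by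
    have := (h0.const_mul a).add ((h0.mul h0).const_mul b)
    simpa using this
  have hden : Tendsto (fun x : ℝ => 1 + x⁻¹ * x⁻¹) l (𝓝 1) := by
    have := (h0.mul h0).const_add 1
    simpa using this
  have h := hnum.div hden one_ne_zero
  rw [zero_div] at h
  refine h.congr' ?_
  filter_upwards [hne] with x hx
  simp only [Pi.div_apply]
  have h1 : (1:ℝ) + x⁻¹ * x⁻¹ ≠ 0 := ne_of_gt (by nlinarith [mul_self_nonneg x⁻¹])
  have h2 : x ^ 2 + (1:ℝ) ≠ 0 := by positivity
  rw [div_eq_div_iff h1 h2]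
  field_simp

lemma tendsto_ratio (s y : ℝ) (l : Filter ℝ) (h0 : Tendsto (fun x : ℝ => x⁻¹) l (𝓝 0))
    (hne : ∀ᶠ x in l, x ≠ 0) :
    Tendsto (fun x : ℝ => ((x - s) ^ 2 + y ^ 2) / (x ^ 2 + 1)) l (𝓝 1) := by
  have h := (tendsto_lin_div (-2 * s) (s ^ 2 + y ^ 2 - 1) l h0 hne).const_add 1
  rw [add_zero] at h
  refine h.congr fun x => ?_
  have hx : x ^ 2 + 1 ≠ 0 := by positivity
  field_simp
  ring

lemma arctan_top : Tendsto arctan atTop (𝓝 (π / 2)) :=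
  tendsto_arctan_atTop.mono_right nhdsWithin_le_nhds

lemma arctan_bot : Tendsto arctan atBot (𝓝 (-(π / 2))) :=
  tendsto_arctan_atBot.mono_right nhdsWithin_le_nhds

lemma keyintegral (y : ℝ) (hy : 0 < y) (s : ℝ) :
    ∫ x : ℝ, (((x - s) ^ 2 + y ^ 2) * (x ^ 2 + 1))⁻¹
      = π * (y + 1) / (y * (s ^ 2 + (y + 1) ^ 2)) := by
  have hne_top : ∀ᶠ x : ℝ in atTop, x ≠ 0 := by
    filter_upwards [eventually_gt_atTop 0] with x hx using hx.ne'
  have hne_bot : ∀ᶠ x : ℝ in atBot, x ≠ 0 := by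
    filter_upwards [eventually_lt_atBot 0] with x hx using hx.ne
  by_cases hq0 : s ^ 2 + (y - 1) ^ 2 = 0
  · -- s = 0, y = 1
    have hs : s = 0 := by nlinarith [sq_nonneg s, sq_nonneg (y - 1)]
    have hy1 : y = 1 := by nlinarith [sq_nonneg s, sq_nonneg (y - 1)]
    subst hs; subst hy1
    set F : ℝ → ℝ := fun x => (arctan x + x / (x ^ 2 + 1)) / 2 with hF
    have hderiv : ∀ x : ℝ, HasDerivAt F ((((x - 0) ^ 2 + 1 ^ 2) * (x ^ 2 + 1))⁻¹) x := by
      intro x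
      have hx : x ^ 2 + 1 ≠ 0 := by positivity
      have h1 : HasDerivAt (fun x : ℝ => x ^ 2 + 1) (2 * x) x := by
        simpa using (hasDerivAt_pow 2 x).add_const 1
      have h2 : HasDerivAt (fun x : ℝ => x / (x ^ 2 + 1))
          ((1 * (x ^ 2 + 1) - x * (2 * x)) / (x ^ 2 + 1) ^ 2) x :=
        (hasDerivAt_id x).div h1 hx
      have h3 := ((hasDerivAt_arctan x).add h2).div_const 2
      refine h3.congr_deriv ?_
      field_simp
      ring
    have htop : Tendsto F atTop (𝓝 ((π / 2 + 0) / 2)) := by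
      refine Tendsto.div_const ?_ 2
      refine arctan_top.add ?_
      have := tendsto_lin_div 1 0 atTop tendsto_inv_atTop_zero hne_top
      refine this.congr fun x => by ring_nf
    have hbot : Tendsto F atBot (𝓝 ((-(π / 2) + 0) / 2)) := by
      refine Tendsto.div_const ?_ 2
      refine arctan_bot.add ?_
      have := tendsto_lin_div 1 0 atBot inv_atBot_zero hne_bot
      refine this.congr fun x => by ring_nf
    rw [MeasureTheory.integral_of_hasDerivAt_of_tendsto hderiv
      (keyintegrable 1 one_pos 0) hbot htop]
    ring_nf
  · have hq : 0 < s ^ 2 + (y - 1) ^ 2 := lt_of_le_of_ne (by positivity) (Ne.symm hq0)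
    have hp : 0 < s ^ 2 + (y + 1) ^ 2 := by nlinarith
    set Q : ℝ := (s ^ 2 + (y + 1) ^ 2) * (s ^ 2 + (y - 1) ^ 2) with hQ
    have hQpos : 0 < Q := mul_pos hp hq
    set A : ℝ := -2 * s / Q with hA
    set B : ℝ := (s ^ 2 + 1 - y ^ 2) / Q with hB
    set D : ℝ := (s ^ 2 + y ^ 2 - 1) / Q with hD
    set F : ℝ → ℝ := fun x =>
      A / 2 * (Real.log ((x - s) ^ 2 + y ^ 2) - Real.log (x ^ 2 + 1))
        + (B / y) * arctan ((x - s) / y) + D * arctan x with hF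
    have hderiv : ∀ x : ℝ, HasDerivAt F ((((x - s) ^ 2 + y ^ 2) * (x ^ 2 + 1))⁻¹) x := by
      intro x
      have hd1 : (0:ℝ) < (x - s) ^ 2 + y ^ 2 := by positivity
      have hd2 : (0:ℝ) < x ^ 2 + 1 := by positivity
      have h1 : HasDerivAt (fun x : ℝ => (x - s) ^ 2 + y ^ 2) (2 * (x - s)) x := by
        have := (((hasDerivAt_id x).sub_const s).pow 2).add_const (y ^ 2)
        simpa using this
      have h2 : HasDerivAt (fun x : ℝ => x ^ 2 + 1) (2 * x) x := by
        simpa using (hasDerivAt_pow 2 x).add_const 1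
      have hlog1 := h1.log hd1.ne'
      have hlog2 := h2.log hd2.ne'
      have h3 : HasDerivAt (fun x : ℝ => arctan ((x - s) / y))
          ((1 / (1 + ((x - s) / y) ^ 2)) * (1 / y)) x := by
        have hin : HasDerivAt (fun x : ℝ => (x - s) / y) (1 / y) x := by
          simpa using ((hasDerivAt_id x).sub_const s).div_const y
        exact (hasDerivAt_arctan ((x - s) / y)).comp x hin
      have htot := (((hlog1.sub hlog2).const_mul (A / 2)).add
        (h3.const_mul (B / y))).add ((hasDerivAt_arctan x).const_mul D)
      refine htot.congr_deriv ?_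
      have hyy : (0:ℝ) < 1 + ((x - s) / y) ^ 2 := by positivity
      rw [hA, hB, hD]
      field_simp
      ring
    have hlim : ∀ l : Filter ℝ, Tendsto (fun x : ℝ => x⁻¹) l (𝓝 0) → (∀ᶠ x in l, x ≠ 0) →
        Tendsto (fun x : ℝ =>
          Real.log ((x - s) ^ 2 + y ^ 2) - Real.log (x ^ 2 + 1)) l (𝓝 0) := by
      intro l h0 hne
      have hr := tendsto_ratio s y l h0 hne
      have hcont : ContinuousAt Real.log 1 := Real.continuousAt_log one_ne_zero
      have := hcont.tendsto.comp hr
      rw [Real.log_one] at this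
      refine this.congr fun x => ?_
      rw [Function.comp_apply, Real.log_div (by positivity) (by positivity)]
    have harct : ∀ x : ℝ, True := fun _ => trivial
    have htop : Tendsto F atTop (𝓝 (A / 2 * 0 + (B / y) * (π / 2) + D * (π / 2))) := by
      refine (Tendsto.add (Tendsto.add ?_ ?_) ?_)
      · exact (hlim atTop tendsto_inv_atTop_zero hne_top).const_mul (A / 2)
      · refine (arctan_top.comp ?_).const_mul (B / y)
        exact (tendsto_atTop_add_const_right atTop (-s) tendsto_id).atTop_div_const hy |>.congr
          fun x => by simp only [id_eq, Function.comp_apply]; ring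
      · exact arctan_top.const_mul D
    have hbot : Tendsto F atBot (𝓝 (A / 2 * 0 + (B / y) * (-(π / 2)) + D * (-(π / 2)))) := by
      refine (Tendsto.add (Tendsto.add ?_ ?_) ?_)
      · exact (hlim atBot inv_atBot_zero hne_bot).const_mul (A / 2)
      · refine (arctan_bot.comp ?_).const_mul (B / y)
        exact (tendsto_atBot_add_const_right atBot (-s) tendsto_id).atBot_div_const hy |>.congr
          fun x => by simp only [id_eq, Function.comp_apply]; ring
      · exact arctan_bot.const_mul D
    rw [MeasureTheory.integral_of_hasDerivAt_of_tendsto hderiv (keyintegrable y hy s) hbot htop]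
    rw [hB, hD]
    field_simp
    ring

lemma den_ne (w : ℂ) (hw : w.im ≠ 0) (s : ℝ) : (s : ℂ) - w ≠ 0 := by
  intro h
  have := congrArg Complex.im h
  simp at this
  exact hw this

lemma Kbdd (w : ℂ) (hw : w.im ≠ 0) (s : ℝ) :
    ‖(1 + (s : ℂ) * w) / ((s : ℂ) - w)‖ ≤ ‖w‖ + ‖w ^ 2 + 1‖ / |w.im| := by
  have h1 : (1 + (s : ℂ) * w) / ((s : ℂ) - w) = w + (w ^ 2 + 1) / ((s : ℂ) - w) := by
    field_simp [den_ne w hw s]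
    ring
  rw [h1]
  refine (norm_add_le _ _).trans ?_
  gcongr
  rw [norm_div]
  apply div_le_div_of_nonneg_left (norm_nonneg _) (abs_pos.2 hw)
  calc |w.im| = |((s:ℂ) - w).im| := by simp
  _ ≤ ‖(s:ℂ) - w‖ := Complex.abs_im_le_norm _

lemma Kcont (w : ℂ) (hw : w.im ≠ 0) :
    Continuous (fun s : ℝ => (1 + (s : ℂ) * w) / ((s : ℂ) - w)) := by
  apply Continuous.div (by continuity) (by continuity)
  intro s
  exact den_ne w hw s

lemma Kint (w : ℂ) (hw : w.im ≠ 0) {μ : Measure ℝ} {g : ℝ → ℂ} (hg : Integrable g μ) :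
    Integrable (fun s : ℝ => (1 + (s : ℂ) * w) / ((s : ℂ) - w) * g s) μ :=
  hg.bdd_mul (Kcont w hw).aestronglyMeasurable
    (ae_of_all _ fun s => Kbdd w hw s)

lemma kdiff (y : ℝ) (hy : y ≠ 0) (x s : ℝ) :
    (1 + (s : ℂ) * ((x : ℂ) + (y : ℂ) * Complex.I)) / ((s : ℂ) - ((x : ℂ) + (y : ℂ) * Complex.I))
      - (1 + (s : ℂ) * ((x : ℂ) - (y : ℂ) * Complex.I)) / ((s : ℂ) - ((x : ℂ) - (y : ℂ) * Complex.I))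
      = 2 * Complex.I * (y : ℂ) * ((((1 + s ^ 2) / ((s - x) ^ 2 + y ^ 2)) : ℝ) : ℂ) := by
  have h1 : (s : ℂ) - ((x : ℂ) + (y : ℂ) * Complex.I) ≠ 0 := by
    apply den_ne; simp [hy]
  have h2 : (s : ℂ) - ((x : ℂ) - (y : ℂ) * Complex.I) ≠ 0 := by
    apply den_ne
    simp only [Complex.sub_im, Complex.mul_im, Complex.I_im, Complex.I_re,
      Complex.ofReal_im, Complex.ofReal_re]
    simpa using hy
  have h3 : (((s - x) ^ 2 + y ^ 2 : ℝ) : ℂ) ≠ 0 := by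
    have : (0:ℝ) < (s - x) ^ 2 + y ^ 2 := by positivity
    exact_mod_cast Complex.ofReal_ne_zero.2 this.ne'
  rw [div_sub_div _ _ h1 h2, Complex.ofReal_div]
  rw [show 2 * Complex.I * (y:ℂ) * ((((1 + s ^ 2):ℝ):ℂ) / (((s - x) ^ 2 + y ^ 2 : ℝ):ℂ))
      = (2 * Complex.I * (y:ℂ) * (((1 + s ^ 2):ℝ):ℂ)) / (((s - x) ^ 2 + y ^ 2 : ℝ):ℂ) by ring]
  rw [div_eq_div_iff (mul_ne_zero h1 h2) h3]
  push_cast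
  linear_combination (2 * (y:ℂ) ^ 3 * ((s:ℂ) ^ 2 + 1) * Complex.I) * Complex.I_sq

lemma Phi_formula (φ : ℂ → ℂ) (μ : Measure ℝ) (g : ℝ → ℂ) (hg : Integrable g μ) (lam : ℂ)
    (hrep : ∀ w : ℂ, w.im ≠ 0 →
      φ w = (φ Complex.I + φ (-Complex.I)) / 2 + lam * w
        + ∫ s, ((1 + (s : ℂ) * w) / ((s : ℂ) - w)) * g s ∂μ)
    (y : ℝ) (hy : 0 < y) (x : ℝ) :
    φ ((x : ℂ) + (y : ℂ) * Complex.I) - φ ((x : ℂ) - (y : ℂ) * Complex.I)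
      = 2 * Complex.I * (y : ℂ) * lam
        + 2 * Complex.I * (y : ℂ) *
            ∫ s, ((((1 + s ^ 2) / ((s - x) ^ 2 + y ^ 2)) : ℝ) : ℂ) * g s ∂μ := by
  have hwim : ((x : ℂ) + (y : ℂ) * Complex.I).im ≠ 0 := by simpa using hy.ne'
  have hwbim : ((x : ℂ) - (y : ℂ) * Complex.I).im ≠ 0 := by
    simp only [Complex.sub_im, Complex.mul_im, Complex.I_im, Complex.I_re,
      Complex.ofReal_im, Complex.ofReal_re]
    simpa using hy.ne'
  have hKw := Kint _ hwim hg
  have hKwb := Kint _ hwbim hg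
  rw [hrep _ hwim, hrep _ hwbim]
  have halg : ∀ C a b c d : ℂ, (C + a + c) - (C + b + d) = (a - b) + (c - d) := by
    intros; ring
  rw [halg, ← integral_sub hKw hKwb]
  have hptw : ∀ s : ℝ,
      (1 + (s : ℂ) * ((x : ℂ) + (y : ℂ) * Complex.I)) / ((s : ℂ) - ((x : ℂ) + (y : ℂ) * Complex.I)) * g s
        - (1 + (s : ℂ) * ((x : ℂ) - (y : ℂ) * Complex.I)) / ((s : ℂ) - ((x : ℂ) - (y : ℂ) * Complex.I)) * g s
      = (2 * Complex.I * (y : ℂ)) * (((((1 + s ^ 2) / ((s - x) ^ 2 + y ^ 2)) : ℝ) : ℂ) * g s) := by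
    intro s
    rw [← sub_mul, kdiff y hy.ne' x s]
    ring
  rw [integral_congr_ae (Eventually.of_forall hptw), MeasureTheory.integral_const_mul]
  have : lam * ((x : ℂ) + (y : ℂ) * Complex.I) - lam * ((x : ℂ) - (y : ℂ) * Complex.I)
      = 2 * Complex.I * (y : ℂ) * lam := by ring
  rw [this]

noncomputable def Kk (y x s : ℝ) : ℝ := (1 + s ^ 2) * (((x - s) ^ 2 + y ^ 2) * (x ^ 2 + 1))⁻¹

noncomputable def Fk (y : ℝ) (g : ℝ → ℂ) (p : ℝ × ℝ) : ℂ := ((Kk y p.1 p.2 : ℝ) : ℂ) * g p.2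

lemma Kk_nn (y : ℝ) (hy : 0 < y) (x s : ℝ) : 0 ≤ Kk y x s := by
  have := kerpos y hy s x
  unfold Kk; positivity

lemma Kk_int (y : ℝ) (hy : 0 < y) (s : ℝ) : Integrable (fun x => Kk y x s) :=
  (keyintegrable y hy s).const_mul (1 + s ^ 2)

lemma Kk_val (y : ℝ) (hy : 0 < y) (s : ℝ) :
    ∫ x, Kk y x s = (1 + s ^ 2) * (π * (y + 1) / (y * (s ^ 2 + (y + 1) ^ 2))) := by
  unfold Kk
  rw [MeasureTheory.integral_const_mul, keyintegral y hy s]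

lemma Kk_cont (y : ℝ) (hy : 0 < y) : Continuous (fun p : ℝ × ℝ => Kk y p.1 p.2) := by
  unfold Kk
  apply Continuous.mul (by continuity)
  apply Continuous.inv₀ (by continuity)
  intro p
  exact (kerpos y hy p.2 p.1).ne'

lemma Fk_norm (y : ℝ) (hy : 0 < y) (g : ℝ → ℂ) (p : ℝ × ℝ) :
    ‖Fk y g p‖ = Kk y p.1 p.2 * ‖g p.2‖ := by
  unfold Fk
  simp only [norm_mul, Complex.norm_real, Real.norm_eq_abs, abs_of_nonneg (Kk_nn y hy p.1 p.2)]

lemma kbound (y : ℝ) (hy : 0 < y) (s : ℝ) :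
    (1 + s ^ 2) * (π * (y + 1) / (y * (s ^ 2 + (y + 1) ^ 2))) ≤ π * (y + 1) / y := by
  have h1 : (1 + s ^ 2) / (s ^ 2 + (y + 1) ^ 2) ≤ 1 :=
    div_le_one_of_le₀ (by nlinarith) (by positivity)
  calc (1 + s ^ 2) * (π * (y + 1) / (y * (s ^ 2 + (y + 1) ^ 2)))
      = (π * (y + 1) / y) * ((1 + s ^ 2) / (s ^ 2 + (y + 1) ^ 2)) := by
        field_simp
    _ ≤ (π * (y + 1) / y) * 1 := mul_le_mul_of_nonneg_left h1 (by positivity)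
    _ = π * (y + 1) / y := mul_one _

lemma kbound_nn (y : ℝ) (hy : 0 < y) (s : ℝ) :
    0 ≤ (1 + s ^ 2) * (π * (y + 1) / (y * (s ^ 2 + (y + 1) ^ 2))) := by positivity

lemma Fk_norm_int_eq (y : ℝ) (hy : 0 < y) (g : ℝ → ℂ) :
    (fun s => ∫ x, ‖Fk y g (x, s)‖)
      = fun s => ((1 + s ^ 2) * (π * (y + 1) / (y * (s ^ 2 + (y + 1) ^ 2)))) * ‖g s‖ := by
  funext s
  have h : ∀ x : ℝ, ‖Fk y g (x, s)‖ = Kk y x s * ‖g s‖ := fun x => Fk_norm y hy g (x, s)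
  rw [integral_congr_ae (Eventually.of_forall h), integral_mul_const, Kk_val y hy s]

lemma Fk_int (y : ℝ) (hy : 0 < y) (μ : Measure ℝ) [IsFiniteMeasure μ] (g : ℝ → ℂ)
    (hg : Integrable g μ) : Integrable (Fk y g) (volume.prod μ) := by
  have hm : AEStronglyMeasurable (Fk y g) (volume.prod μ) :=
    (Complex.continuous_ofReal.comp (Kk_cont y hy)).aestronglyMeasurable.mul
      hg.aestronglyMeasurable.comp_snd
  refine (integrable_prod_iff' hm).2 ⟨?_, ?_⟩
  · filter_upwards with s
    exact (Kk_int y hy s).ofReal.mul_const (g s)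
  · rw [show (fun s => ∫ x, ‖Fk y g (x, s)‖) = _ from Fk_norm_int_eq y hy g]
    apply hg.norm.bdd_mul (c := π * (y + 1) / y)
    · apply Continuous.aestronglyMeasurable
      apply Continuous.mul (by continuity)
      apply Continuous.div continuous_const (by continuity)
      intro s
      have : (0:ℝ) < y * (s ^ 2 + (y + 1) ^ 2) := by positivity
      exact this.ne'
    · refine ae_of_all _ fun s => ?_
      rw [Real.norm_eq_abs, abs_of_nonneg (kbound_nn y hy s)]
      exact kbound y hy s

lemma hden_c (x : ℝ) : (1 + (x : ℂ) ^ 2) = (((1 + x ^ 2 : ℝ)) : ℂ) := by push_cast; ring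

lemma hdpos (x : ℝ) : (0:ℝ) < 1 + x ^ 2 := by positivity

lemma hdne (x : ℝ) : (1 + (x : ℂ) ^ 2) ≠ 0 := by
  rw [hden_c x]
  exact Complex.ofReal_ne_zero.2 (hdpos x).ne'

lemma hdnorm (x : ℝ) : ‖(1 + (x : ℂ) ^ 2)‖ = 1 + x ^ 2 := by
  rw [hden_c x, Complex.norm_real, Real.norm_eq_abs, abs_of_pos (hdpos x)]

lemma hmain (φ : ℂ → ℂ) (μ : Measure ℝ) (g : ℝ → ℂ) (hg : Integrable g μ) (lam : ℂ)
    (hrep : ∀ w : ℂ, w.im ≠ 0 →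
      φ w = (φ Complex.I + φ (-Complex.I)) / 2 + lam * w
        + ∫ s, ((1 + (s : ℂ) * w) / ((s : ℂ) - w)) * g s ∂μ)
    (y : ℝ) (hy : 0 < y) (x : ℝ) :
    (φ ((x : ℂ) + (y : ℂ) * Complex.I) - φ ((x : ℂ) - (y : ℂ) * Complex.I)) / (1 + (x : ℂ) ^ 2)
      = (2 * Complex.I * (y : ℂ) * lam) * ((((1 + x ^ 2)⁻¹ : ℝ)) : ℂ)
        + (2 * Complex.I * (y : ℂ)) * ∫ s, Fk y g (x, s) ∂μ := by
  rw [Phi_formula φ μ g hg lam hrep y hy x, add_div]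
  congr 1
  · rw [hden_c x, div_eq_mul_inv, ← Complex.ofReal_inv]
  · rw [mul_div_assoc]
    congr 1
    rw [eq_comm]
    have hptw : ∀ s : ℝ, Fk y g (x, s)
        = ((((1 + s ^ 2) / ((s - x) ^ 2 + y ^ 2)) : ℝ) : ℂ) * g s / (1 + (x : ℂ) ^ 2) := by
      intro s
      rw [hden_c x]
      unfold Fk
      have hKr : Kk y x s = ((1 + s ^ 2) / ((s - x) ^ 2 + y ^ 2)) / (1 + x ^ 2) := by
        unfold Kk
        rw [div_div, div_eq_mul_inv]
        congr 2
        ring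
      rw [hKr, Complex.ofReal_div]
      ring
    rw [integral_congr_ae (Eventually.of_forall hptw), integral_div]

lemma my_int_ofReal {μ : Measure ℝ} {f : ℝ → ℝ} :
    ∫ x, ((f x : ℝ) : ℂ) ∂μ = ((∫ x, f x ∂μ : ℝ) : ℂ) :=
  integral_ofReal

lemma hsint (y : ℝ) (hy : 0 < y) (μ : Measure ℝ) [IsFiniteMeasure μ] (g : ℝ → ℂ)
    (hg : Integrable g μ) :
    Integrable (fun s => ((1 + s ^ 2) * (π * (y + 1) / (y * (s ^ 2 + (y + 1) ^ 2)))) * ‖g s‖) μ := by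
  apply hg.norm.bdd_mul (c := π * (y + 1) / y)
  · apply Continuous.aestronglyMeasurable
    apply Continuous.mul (by continuity)
    apply Continuous.div continuous_const (by continuity)
    intro s
    have : (0:ℝ) < y * (s ^ 2 + (y + 1) ^ 2) := by positivity
    exact this.ne'
  · refine ae_of_all _ fun s => ?_
    rw [Real.norm_eq_abs, abs_of_nonneg (kbound_nn y hy s)]
    exact kbound y hy s

/-- **Norm bound and exact value of the line integrals** (Proposition `preinversion`).
The complex measure `λ` is encoded by a finite positive measure `μ` with integrable
complex density `g`; its total variation satisfies `|λ|(ℝ) = ∫ |g| dμ` and its atomic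
mass at `∞` is `lam`. -/
theorem stmt15 (φ : ℂ → ℂ) (hφ : DifferentiableOn ℂ φ {z : ℂ | z.im ≠ 0})
    (μ : Measure ℝ) [IsFiniteMeasure μ] (g : ℝ → ℂ) (hg : Integrable g μ) (lam : ℂ)
    (hrep : ∀ w : ℂ, w.im ≠ 0 →
      φ w = (φ Complex.I + φ (-Complex.I)) / 2 + lam * w
        + ∫ s, ((1 + (s : ℂ) * w) / ((s : ℂ) - w)) * g s ∂μ) :
    ∀ y : ℝ, 0 < y →
      Continuous (fun x : ℝ =>
        (φ ((x : ℂ) + (y : ℂ) * Complex.I) - φ ((x : ℂ) - (y : ℂ) * Complex.I))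
          / (1 + (x : ℂ) ^ 2))
      ∧ Integrable (fun x : ℝ =>
          (φ ((x : ℂ) + (y : ℂ) * Complex.I) - φ ((x : ℂ) - (y : ℂ) * Complex.I))
            / (1 + (x : ℂ) ^ 2))
      ∧ (∫ x : ℝ, ‖φ ((x : ℂ) + (y : ℂ) * Complex.I)
              - φ ((x : ℂ) - (y : ℂ) * Complex.I)‖ / (1 + x ^ 2))
          ≤ 2 * Real.pi * y * ((∫ s, ‖g s‖ ∂μ) + ‖lam‖) + 2 * Real.pi * ∫ s, ‖g s‖ ∂μ
      ∧ (∫ x : ℝ,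
            (φ ((x : ℂ) + (y : ℂ) * Complex.I) - φ ((x : ℂ) - (y : ℂ) * Complex.I))
              / (1 + (x : ℂ) ^ 2))
          = 2 * Real.pi * Complex.I * lam * (y : ℂ)
            + 2 * Real.pi * Complex.I * ((y : ℂ) + 1) *
                ∫ s, ((((s : ℝ) ^ 2 + 1) / ((s : ℝ) ^ 2 + (y + 1) ^ 2) : ℝ) : ℂ) * g s ∂μ := by
  intro y hy
  have hyc : (y : ℂ) ≠ 0 := Complex.ofReal_ne_zero.2 hy.ne'
  -- continuity
  have hopen : IsOpen {z : ℂ | z.im ≠ 0} := isOpen_compl_singleton.preimage Complex.continuous_im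
  have hcφ : ContinuousOn φ {z : ℂ | z.im ≠ 0} := hφ.continuousOn
  have hc1 : Continuous (fun x : ℝ => φ ((x : ℂ) + (y : ℂ) * Complex.I)) := by
    apply hcφ.comp_continuous (Complex.continuous_ofReal.add continuous_const)
    intro x
    simpa using hy.ne'
  have hc2 : Continuous (fun x : ℝ => φ ((x : ℂ) - (y : ℂ) * Complex.I)) := by
    apply hcφ.comp_continuous (Complex.continuous_ofReal.sub continuous_const)
    intro x
    simp only [Set.mem_setOf_eq, Complex.sub_im, Complex.mul_im, Complex.I_im, Complex.I_re,
      Complex.ofReal_im, Complex.ofReal_re]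
    simpa using hy.ne'
  have hcont : Continuous (fun x : ℝ =>
      (φ ((x : ℂ) + (y : ℂ) * Complex.I) - φ ((x : ℂ) - (y : ℂ) * Complex.I))
        / (1 + (x : ℂ) ^ 2)) :=
    (hc1.sub hc2).div (continuous_const.add (Complex.continuous_ofReal.pow 2)) fun x => hdne x
  -- integrability
  have hFi := Fk_int y hy μ g hg
  have i1 : Integrable (fun x : ℝ =>
      (2 * Complex.I * (y : ℂ) * lam) * ((((1 + x ^ 2)⁻¹ : ℝ)) : ℂ)) volume :=
    integrable_inv_one_add_sq.ofReal.const_mul _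
  have i2 : Integrable (fun x : ℝ => (2 * Complex.I * (y : ℂ)) * ∫ s, Fk y g (x, s) ∂μ) volume :=
    hFi.integral_prod_left.const_mul _
  have hint : Integrable (fun x : ℝ =>
      (φ ((x : ℂ) + (y : ℂ) * Complex.I) - φ ((x : ℂ) - (y : ℂ) * Complex.I))
        / (1 + (x : ℂ) ^ 2)) volume := by
    refine (i1.add i2).congr (Eventually.of_forall fun x => ?_)
    exact (hmain φ μ g hg lam hrep y hy x).symm
  refine ⟨hcont, hint, ?_, ?_⟩
  · -- norm bound
    have hrw : (fun x : ℝ => ‖φ ((x : ℂ) + (y : ℂ) * Complex.I)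
          - φ ((x : ℂ) - (y : ℂ) * Complex.I)‖ / (1 + x ^ 2))
        = fun x : ℝ => ‖(2 * Complex.I * (y : ℂ) * lam) * ((((1 + x ^ 2)⁻¹ : ℝ)) : ℂ)
            + (2 * Complex.I * (y : ℂ)) * ∫ s, Fk y g (x, s) ∂μ‖ := by
      funext x
      rw [← hmain φ μ g hg lam hrep y hy x, norm_div, hdnorm]
    rw [hrw]
    have step1 : (∫ x : ℝ, ‖(2 * Complex.I * (y : ℂ) * lam) * ((((1 + x ^ 2)⁻¹ : ℝ)) : ℂ)
            + (2 * Complex.I * (y : ℂ)) * ∫ s, Fk y g (x, s) ∂μ‖)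
        ≤ (∫ x : ℝ, ‖(2 * Complex.I * (y : ℂ) * lam) * ((((1 + x ^ 2)⁻¹ : ℝ)) : ℂ)‖)
          + ∫ x : ℝ, ‖(2 * Complex.I * (y : ℂ)) * ∫ s, Fk y g (x, s) ∂μ‖ := by
      rw [← integral_add i1.norm i2.norm]
      exact integral_mono (i1.add i2).norm (i1.norm.add i2.norm) fun x => norm_add_le _ _
    have e1 : (∫ x : ℝ, ‖(2 * Complex.I * (y : ℂ) * lam) * ((((1 + x ^ 2)⁻¹ : ℝ)) : ℂ)‖)
        = 2 * y * ‖lam‖ * π := by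
      have : ∀ x : ℝ, ‖(2 * Complex.I * (y : ℂ) * lam) * ((((1 + x ^ 2)⁻¹ : ℝ)) : ℂ)‖
          = (2 * y * ‖lam‖) * (1 + x ^ 2)⁻¹ := by
        intro x
        simp only [norm_mul, Complex.norm_I, Complex.norm_real, Real.norm_eq_abs,
          abs_of_pos hy, abs_of_pos (inv_pos.2 (hdpos x))]
        norm_num
        try ring
      rw [integral_congr_ae (Eventually.of_forall this), MeasureTheory.integral_const_mul,
        integral_univ_inv_one_add_sq]
    have e2 : (∫ x : ℝ, ‖(2 * Complex.I * (y : ℂ)) * ∫ s, Fk y g (x, s) ∂μ‖)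
        ≤ 2 * y * (π * (y + 1) / y * ∫ s, ‖g s‖ ∂μ) := by
      have hnn : ∀ x : ℝ, ‖(2 * Complex.I * (y : ℂ)) * ∫ s, Fk y g (x, s) ∂μ‖
          = (2 * y) * ‖∫ s, Fk y g (x, s) ∂μ‖ := by
        intro x
        simp only [norm_mul, Complex.norm_I, Complex.norm_real, Real.norm_eq_abs, abs_of_pos hy]
        norm_num
      rw [integral_congr_ae (Eventually.of_forall hnn), MeasureTheory.integral_const_mul]
      have h2 : (∫ x : ℝ, ‖∫ s, Fk y g (x, s) ∂μ‖) ≤ ∫ x : ℝ, ∫ s, ‖Fk y g (x, s)‖ ∂μ :=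
        integral_mono hFi.integral_prod_left.norm hFi.norm.integral_prod_left
          fun x => norm_integral_le_integral_norm _
      have h3 : (∫ x : ℝ, ∫ s, ‖Fk y g (x, s)‖ ∂μ) = ∫ s, (∫ x : ℝ, ‖Fk y g (x, s)‖) ∂μ :=
        integral_integral_swap hFi.norm
      have h4 : (∫ s, (∫ x : ℝ, ‖Fk y g (x, s)‖) ∂μ) ≤ π * (y + 1) / y * ∫ s, ‖g s‖ ∂μ := by
        rw [show (fun s => ∫ x : ℝ, ‖Fk y g (x, s)‖) = _ from Fk_norm_int_eq y hy g]
        rw [← MeasureTheory.integral_const_mul]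
        refine integral_mono (hsint y hy μ g hg) (hg.norm.const_mul _) fun s => ?_
        exact mul_le_mul_of_nonneg_right (kbound y hy s) (norm_nonneg _)
      have := (h2.trans (h3.le)).trans h4
      exact mul_le_mul_of_nonneg_left this (by positivity)
    have hπ := Real.pi_pos
    have hgnn : 0 ≤ ∫ s, ‖g s‖ ∂μ := integral_nonneg fun s => norm_nonneg _
    refine (step1.trans (by linarith [e1, e2] : _ ≤ 2 * y * ‖lam‖ * π
      + 2 * y * (π * (y + 1) / y * ∫ s, ‖g s‖ ∂μ))).trans ?_
    have : 2 * y * (π * (y + 1) / y * ∫ s, ‖g s‖ ∂μ) = 2 * π * (y + 1) * ∫ s, ‖g s‖ ∂μ := by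
      field_simp
    rw [this]
    ring_nf
    nlinarith [hπ, hgnn, hy]
  · -- exact value
    rw [integral_congr_ae (Eventually.of_forall (hmain φ μ g hg lam hrep y hy))]
    rw [integral_add i1 i2, MeasureTheory.integral_const_mul, MeasureTheory.integral_const_mul]
    rw [my_int_ofReal, integral_univ_inv_one_add_sq]
    have hswap : (∫ x : ℝ, ∫ s, Fk y g (x, s) ∂μ) = ∫ s, (∫ x : ℝ, Fk y g (x, s)) ∂μ :=
      integral_integral_swap hFi
    rw [hswap]
    have hinner : ∀ s : ℝ, (∫ x : ℝ, Fk y g (x, s))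
        = (((π * (y + 1) / y : ℝ)) : ℂ) * (((((s : ℝ) ^ 2 + 1) / ((s : ℝ) ^ 2 + (y + 1) ^ 2) : ℝ)) : ℂ) * g s := by
      intro s
      have : (∫ x : ℝ, Fk y g (x, s)) = ((∫ x : ℝ, Kk y x s : ℝ) : ℂ) * g s := by
        have hfk : (fun x : ℝ => Fk y g (x, s)) = fun x : ℝ => ((Kk y x s : ℝ) : ℂ) * g s := rfl
        rw [hfk, integral_mul_const, my_int_ofReal]
      rw [this, Kk_val y hy s]
      have hr : ((1 + s ^ 2) * (π * (y + 1) / (y * (s ^ 2 + (y + 1) ^ 2))) : ℝ)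
          = (π * (y + 1) / y) * ((s ^ 2 + 1) / (s ^ 2 + (y + 1) ^ 2)) := by
        field_simp
        ring
      rw [hr, Complex.ofReal_mul]
    rw [integral_congr_ae (Eventually.of_forall hinner)]
    rw [show (fun s => (((π * (y + 1) / y : ℝ)) : ℂ)
        * (((((s : ℝ) ^ 2 + 1) / ((s : ℝ) ^ 2 + (y + 1) ^ 2) : ℝ)) : ℂ) * g s)
      = fun s => (((π * (y + 1) / y : ℝ)) : ℂ)
        * ((((((s : ℝ) ^ 2 + 1) / ((s : ℝ) ^ 2 + (y + 1) ^ 2) : ℝ)) : ℂ) * g s) from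
        funext fun s => mul_assoc _ _ _]
    rw [MeasureTheory.integral_const_mul]
    push_cast
    field_simp
end

section
/- For every z ∈ ℂ not in (π/2)·ℤ, the series Σ_{n∈ℤ} ((−1)^{n+1}/(1+(πn/2)²)) · (1+πnz/2)/(πn/2 − z) converges absolutely and its sum equals 2/sin(2z). -/
open Filter Topology Complex Real AddCircle intervalIntegral

private lemma aux_neg_one_zpow_neg (n : ℤ) : ((-1 : ℂ)) ^ (-n) = (-1 : ℂ) ^ n := by
  rw [zpow_neg]
  exact inv_eq_of_mul_eq_one_right (by rw [← mul_zpow]; norm_num)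

private lemma aux_summable_norm (f : ℤ → ℂ) (C : ℝ) (N : ℤ)
    (h : ∀ n : ℤ, N ≤ |n| → ‖f n‖ ≤ C / (n : ℝ) ^ 2) : Summable fun n : ℤ => ‖f n‖ := by
  have hg : Summable (fun n : ℤ => C / (n : ℝ) ^ 2) := by
    simpa [div_eq_mul_inv] using ((Real.summable_one_div_int_pow (p := 2)).mpr one_lt_two).mul_left C
  refine Summable.of_norm_bounded_eventually hg ?_
  rw [Filter.eventually_cofinite]
  refine Set.Finite.subset (Set.finite_Icc (-N) N) ?_
  intro n hn
  simp only [Set.mem_setOf_eq, norm_norm] at hn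
  simp only [Set.mem_Icc]
  by_contra hmem
  rw [not_and_or, not_le, not_le] at hmem
  refine hn (h n ?_)
  rcases hmem with h1 | h1
  · exact le_abs.2 (Or.inr (by linarith))
  · exact le_abs.2 (Or.inl (by linarith))

private lemma aux_coeff (α : ℂ) (hα : ∀ m : ℤ, α ≠ m) (n : ℤ) :
    haveI : Fact (0 < 2 * π) := ⟨by positivity⟩
    fourierCoeff (AddCircle.liftIco (2*π) (-π) (fun x : ℝ => Complex.cos (α * x))) n
      = (-1)^n * α * Complex.sin (↑π * α) / (↑π * (α^2 - (n:ℂ)^2)) := by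
  haveI : Fact (0 < 2 * π) := ⟨by positivity⟩
  have hπ : (π:ℂ) ≠ 0 := ofReal_ne_zero.mpr pi_ne_zero
  have hs1 : α - n ≠ 0 := sub_ne_zero.mpr (hα n)
  have hs2 : α + n ≠ 0 := by
    intro h
    exact hα (-n) (by push_cast; linear_combination h)
  have h1 : I * (α - n) ≠ 0 := mul_ne_zero I_ne_zero hs1
  have h2 : -I * (α + n) ≠ 0 := mul_ne_zero (neg_ne_zero.mpr I_ne_zero) hs2
  rw [fourierCoeff_liftIco_eq, fourierCoeffOn_eq_integral]
  simp_rw [fourier_coe_apply, smul_eq_mul]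
  rw [show (-π + 2*π - -π : ℝ) = 2*π by ring, show (-π + 2*π : ℝ) = π by ring]
  have key : ∀ x : ℝ, cexp (2*(π:ℂ)*I*((-n : ℤ):ℂ)*(x:ℂ)/((2*π : ℝ):ℂ)) * Complex.cos (α*(x:ℂ))
      = (cexp ((I*(α-n))*(x:ℂ)) + cexp ((-I*(α+n))*(x:ℂ)))/2 := by
    intro x
    have e1 : I*(α-(n:ℂ))*(x:ℂ) = 2*(π:ℂ)*I*((-n : ℤ):ℂ)*(x:ℂ)/((2*π : ℝ):ℂ) + α*(x:ℂ)*I := by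
      push_cast; field_simp; ring
    have e2 : -I*(α+(n:ℂ))*(x:ℂ) = 2*(π:ℂ)*I*((-n : ℤ):ℂ)*(x:ℂ)/((2*π : ℝ):ℂ) + -(α*(x:ℂ))*I := by
      push_cast; field_simp; ring
    rw [e1, e2, Complex.exp_add, Complex.exp_add, Complex.cos]
    ring
  rw [intervalIntegral.integral_congr (g := fun x : ℝ =>
      (cexp ((I*(α-n))*(x:ℂ)) + cexp ((-I*(α+n))*(x:ℂ)))/2) (fun x _ => key x)]
  have i1 : IntervalIntegrable (fun x : ℝ => cexp ((I*(α-n))*(x:ℂ))) MeasureTheory.volume (-π) π :=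
    (Complex.continuous_exp.comp (by continuity)).intervalIntegrable _ _
  have i2 : IntervalIntegrable (fun x : ℝ => cexp ((-I*(α+n))*(x:ℂ))) MeasureTheory.volume (-π) π :=
    (Complex.continuous_exp.comp (by continuity)).intervalIntegrable _ _
  rw [intervalIntegral.integral_div, intervalIntegral.integral_add i1 i2,
    integral_exp_mul_complex h1, integral_exp_mul_complex h2]
  have q1 : I*(α-(n:ℂ))*((π:ℝ):ℂ) = α*(π:ℂ)*I + ((-n : ℤ):ℂ)*((π:ℂ)*I) := by push_cast; ring
  have q2 : I*(α-(n:ℂ))*((-π:ℝ):ℂ) = -(α*(π:ℂ)*I) + ((n : ℤ):ℂ)*((π:ℂ)*I) := by push_cast; ring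
  have q3 : -I*(α+(n:ℂ))*((π:ℝ):ℂ) = -(α*(π:ℂ)*I) + ((-n : ℤ):ℂ)*((π:ℂ)*I) := by push_cast; ring
  have q4 : -I*(α+(n:ℂ))*((-π:ℝ):ℂ) = α*(π:ℂ)*I + ((n : ℤ):ℂ)*((π:ℂ)*I) := by push_cast; ring
  rw [q1, q2, q3, q4, Complex.exp_add, Complex.exp_add, Complex.exp_add, Complex.exp_add,
    Complex.exp_int_mul, Complex.exp_int_mul, Complex.exp_pi_mul_I, aux_neg_one_zpow_neg,
    Complex.exp_neg]
  rw [Complex.sin, show -((π:ℂ)*α)*I = -(α*(π:ℂ)*I) by ring, show ((π:ℂ)*α)*I = α*(π:ℂ)*I by ring,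
    Complex.exp_neg]
  have hdiv1 : ∀ X w : ℂ, X/(I*w) = (-I*X)/w := by
    intro X w; rw [← div_div, div_eq_mul_inv X I, Complex.inv_I]; ring
  have hdiv2 : ∀ X w : ℂ, X/(-I*w) = (I*X)/w := by
    intro X w; rw [← div_div, div_eq_mul_inv X (-I), inv_neg, Complex.inv_I]; ring
  rw [hdiv1, hdiv2, Complex.real_smul]
  have hE : cexp (α*(π:ℂ)*I) ≠ 0 := Complex.exp_ne_zero _
  have hαn2 : α^2 - (n:ℂ)^2 ≠ 0 := by
    intro h
    rcases mul_eq_zero.mp (by linear_combination h : (α - n) * (α + n) = 0) with h' | h'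
    exacts [hs1 h', hs2 h']
  push_cast
  field_simp
  ring

set_option maxHeartbeats 2000000 in
/-- **The expansion of `2/sin(2z)`**: for `z` avoiding the multiples of `π/2`, the series
`Σ_{n∈ℤ} ((−1)^{n+1}/(1+(πn/2)²))·(1+πnz/2)/(πn/2−z)` converges absolutely to
`2/sin(2z)`. -/
theorem stmt18 (z : ℂ) (hz : ∀ n : ℤ, z ≠ (Real.pi : ℂ) * (n : ℂ) / 2) :
    Summable (fun n : ℤ =>
      ‖((-1 : ℂ) ^ (n + 1) / (1 + ((Real.pi : ℂ) * (n : ℂ) / 2) ^ 2)) *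
        ((1 + (Real.pi : ℂ) * (n : ℂ) * z / 2) / ((Real.pi : ℂ) * (n : ℂ) / 2 - z))‖)
    ∧ HasSum (fun n : ℤ =>
        ((-1 : ℂ) ^ (n + 1) / (1 + ((Real.pi : ℂ) * (n : ℂ) / 2) ^ 2)) *
          ((1 + (Real.pi : ℂ) * (n : ℂ) * z / 2) / ((Real.pi : ℂ) * (n : ℂ) / 2 - z)))
        (2 / Complex.sin (2 * z)) := by
  haveI : Fact (0 < 2 * π) := ⟨by positivity⟩
  have hπ : (π:ℂ) ≠ 0 := ofReal_ne_zero.mpr pi_ne_zero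
  set f : ℤ → ℂ := fun n : ℤ =>
      ((-1 : ℂ) ^ (n + 1) / (1 + ((Real.pi : ℂ) * (n : ℂ) / 2) ^ 2)) *
        ((1 + (Real.pi : ℂ) * (n : ℂ) * z / 2) / ((Real.pi : ℂ) * (n : ℂ) / 2 - z)) with hf_def
  -- Part 1 : absolute convergence
  have part1 : Summable fun n : ℤ => ‖f n‖ := by
    apply aux_summable_norm f (1 + ‖z‖) ⌈2*‖z‖+2⌉
    intro n hn
    have hr : (2*‖z‖+2 : ℝ) ≤ |(n:ℝ)| := by
      calc (2*‖z‖+2 : ℝ) ≤ (⌈2*‖z‖+2⌉ : ℤ) := Int.le_ceil _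
        _ ≤ ((|n| : ℤ) : ℝ) := by exact_mod_cast hn
        _ = |(n:ℝ)| := by push_cast; rfl
    set A : ℝ := π * |(n:ℝ)| / 2 with hA_def
    have hzn : (0:ℝ) ≤ ‖z‖ := norm_nonneg z
    have hA1 : 2*‖z‖+2 ≤ A := by
      have := Real.pi_gt_three
      rw [hA_def]; nlinarith
    have hApos : (0:ℝ) < A := by linarith
    have hA : ‖((π:ℂ)*(n:ℂ)/2)‖ = A := by
      rw [show ((π:ℂ)*(n:ℂ)/2) = ((π*(n:ℝ)/2 : ℝ):ℂ) by push_cast; ring]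
      rw [Complex.norm_real, Real.norm_eq_abs, abs_div, abs_mul,
        abs_of_pos Real.pi_pos, hA_def]
      norm_num
    have h2 : A^2 ≤ ‖(1 + ((π:ℂ)*(n:ℂ)/2)^2)‖ := by
      rw [show (1 + ((π:ℂ)*(n:ℂ)/2)^2) = ((1 + (π*(n:ℝ)/2)^2 : ℝ):ℂ) by push_cast; ring]
      rw [Complex.norm_real, Real.norm_eq_abs, abs_of_pos (by positivity)]
      have : A^2 = (π*(n:ℝ)/2)^2 := by
        rw [hA_def, div_pow, div_pow, mul_pow, mul_pow, _root_.sq_abs]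
      nlinarith
    have h3 : A/2 ≤ ‖(π:ℂ)*(n:ℂ)/2 - z‖ := by
      have := norm_sub_norm_le ((π:ℂ)*(n:ℂ)/2) z
      rw [hA] at this
      linarith
    have h4 : ‖1 + (π:ℂ)*(n:ℂ)*z/2‖ ≤ A*(1+‖z‖) := by
      have e : (1 + (π:ℂ)*(n:ℂ)*z/2) = 1 + ((π:ℂ)*(n:ℂ)/2)*z := by ring
      calc ‖1 + (π:ℂ)*(n:ℂ)*z/2‖ ≤ ‖(1:ℂ)‖ + ‖((π:ℂ)*(n:ℂ)/2)*z‖ := by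
            rw [e]; exact norm_add_le _ _
        _ = 1 + A*‖z‖ := by rw [norm_one, norm_mul, hA]
        _ ≤ A*(1+‖z‖) := by nlinarith
    have hnormf : ‖f n‖ = 1/‖(1 + ((π:ℂ)*(n:ℂ)/2)^2)‖ * (‖1 + (π:ℂ)*(n:ℂ)*z/2‖/‖(π:ℂ)*(n:ℂ)/2 - z‖) := by
      rw [hf_def]
      simp only [norm_mul, norm_div, norm_zpow, norm_neg, norm_one, one_zpow]
    rw [hnormf]
    have h2n : (0:ℝ) < (n:ℝ)^2 := by rw [← _root_.sq_abs]; nlinarith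
    calc 1/‖(1 + ((π:ℂ)*(n:ℂ)/2)^2)‖ * (‖1 + (π:ℂ)*(n:ℂ)*z/2‖/‖(π:ℂ)*(n:ℂ)/2 - z‖)
        ≤ 1/A^2 * ((A*(1+‖z‖))/(A/2)) := by
          refine mul_le_mul (one_div_le_one_div_of_le (pow_pos hApos 2) h2)
            (div_le_div₀ (by positivity) h4 (by linarith) h3) (by positivity) (by positivity)
        _ = 2*(1+‖z‖)/A^2 := by field_simp
        _ ≤ (1+‖z‖)/(n:ℝ)^2 := by
          rw [div_le_div_iff₀ (by positivity) h2n]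
          have hA2 : A^2 = π^2*(n:ℝ)^2/4 := by
            rw [hA_def, div_pow, mul_pow, _root_.sq_abs]; norm_num
          have hpi3 := Real.pi_gt_three
          have h9 : 9*(n:ℝ)^2 ≤ π^2*(n:ℝ)^2 :=
            mul_le_mul_of_nonneg_right (by nlinarith) (le_of_lt h2n)
          nlinarith
  refine ⟨part1, ?_⟩
  -- setup
  set α : ℂ := 2*z/(π:ℂ) with hα_def
  have hπα : (π:ℂ) * α = 2*z := by rw [hα_def]; field_simp
  have hα : ∀ m : ℤ, α ≠ m := by
    intro m h
    apply hz m
    rw [hα_def] at h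
    field_simp at h
    linear_combination h/2
  have hs : Complex.sin (2*z) ≠ 0 := by
    rw [Complex.sin_ne_zero_iff]
    intro k hk
    exact hz k (by linear_combination hk/2)
  -- the Fourier series
  set F : C(AddCircle (2*π), ℂ) :=
    ⟨AddCircle.liftIco (2*π) (-π) (fun x : ℝ => Complex.cos (α*x)),
      AddCircle.liftIco_continuous
        (by
          show Complex.cos (α*((-π:ℝ):ℂ)) = Complex.cos (α*((-π+2*π:ℝ):ℂ))
          push_cast
          rw [show α*(-(π:ℂ)) = -(α*(π:ℂ)) by ring, Complex.cos_neg]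
          congr 1
          ring)
        ((Complex.continuous_cos.comp (continuous_const.mul Complex.continuous_ofReal)).continuousOn)⟩
    with hF_def
  have hcoe : ∀ m : ℤ, fourierCoeff (⇑F) m
      = (-1)^m * α * Complex.sin (2*z) / ((π:ℂ)*(α^2 - (m:ℂ)^2)) := by
    intro m
    rw [← hπα]
    exact aux_coeff α hα m
  have hsum_c : Summable (fourierCoeff (⇑F)) := by
    apply Summable.of_norm
    apply aux_summable_norm _ (2*‖α * Complex.sin (2*z)‖/π) ⌈2*‖α‖+2⌉
    intro n hn
    have hr : (2*‖α‖+2 : ℝ) ≤ |(n:ℝ)| := by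
      calc (2*‖α‖+2 : ℝ) ≤ (⌈2*‖α‖+2⌉ : ℤ) := Int.le_ceil _
        _ ≤ ((|n| : ℤ) : ℝ) := by exact_mod_cast hn
        _ = |(n:ℝ)| := by push_cast; rfl
    have hαn : (0:ℝ) ≤ ‖α‖ := norm_nonneg α
    have hd : (n:ℝ)^2/2 ≤ ‖α^2 - (n:ℂ)^2‖ := by
      have h1 := norm_sub_norm_le ((n:ℂ)^2) (α^2)
      rw [norm_sub_rev] at h1
      have h2 : ‖((n:ℂ))^2‖ = (n:ℝ)^2 := by
        rw [norm_pow, show ((n:ℂ)) = (((n:ℝ)):ℂ) by push_cast; rfl, Complex.norm_real,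
          Real.norm_eq_abs, _root_.sq_abs]
      have h3 : ‖α^2‖ = ‖α‖^2 := norm_pow α 2
      rw [h2, h3] at h1
      have hsq : (2*‖α‖+2)^2 ≤ |(n:ℝ)|^2 := by
        have := pow_le_pow_left₀ (by positivity : (0:ℝ) ≤ 2*‖α‖+2) hr 2
        exact this
      rw [_root_.sq_abs] at hsq
      nlinarith
    rw [hcoe n, norm_div, norm_mul]
    have hnum : ‖((-1:ℂ))^n * α‖ = ‖α‖ := by
      rw [norm_mul, norm_zpow, norm_neg, norm_one, one_zpow, one_mul]
    rw [hnum]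
    have hden : ‖(π:ℂ)*(α^2 - (n:ℂ)^2)‖ = π*‖α^2 - (n:ℂ)^2‖ := by
      rw [norm_mul, Complex.norm_real, Real.norm_eq_abs, abs_of_pos Real.pi_pos]
    rw [hden]
    have h2n : (0:ℝ) < (n:ℝ)^2 := by rw [← _root_.sq_abs]; nlinarith
    have hm : ‖α‖ * ‖Complex.sin (2*z)‖ = ‖α * Complex.sin (2*z)‖ := (norm_mul _ _).symm
    have hnn : (0:ℝ) ≤ ‖α * Complex.sin (2*z)‖ := norm_nonneg _
    have hpi := Real.pi_pos
    have hdpos : (0:ℝ) < π*‖α^2 - (n:ℂ)^2‖ := mul_pos hpi (by linarith)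
    rw [div_le_div_iff₀ hdpos h2n]
    have hcanc : 2*‖α * Complex.sin (2*z)‖/π*(π*‖α^2 - (n:ℂ)^2‖)
        = 2*‖α * Complex.sin (2*z)‖*‖α^2 - (n:ℂ)^2‖ := by
      field_simp
    rw [hcanc]
    nlinarith [mul_le_mul_of_nonneg_left hd (by positivity : (0:ℝ) ≤ 2*‖α * Complex.sin (2*z)‖)]
  have hF := has_pointwise_sum_fourier_series_of_summable hsum_c (0 : AddCircle (2*π))
  have hF0 : F (0 : AddCircle (2*π)) = 1 := by
    show AddCircle.liftIco (2*π) (-π) (fun x : ℝ => Complex.cos (α*x)) ((0:ℝ) : AddCircle (2*π)) = 1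
    rw [AddCircle.liftIco_coe_apply (by constructor <;> [linarith [Real.pi_pos]; linarith [Real.pi_pos]])]
    simp
  have hFsum : HasSum (fun m : ℤ => (-1)^m * α * Complex.sin (2*z) / ((π:ℂ)*(α^2 - (m:ℂ)^2))) 1 := by
    have := hF
    simp_rw [fourier_eval_zero, smul_eq_mul, mul_one, hcoe, hF0] at this
    exact this
  -- symmetrization
  have hsumf : Summable f := part1.of_norm
  obtain ⟨L, hL⟩ := hsumf
  have hLneg : HasSum (fun n : ℤ => f (-n)) L := by
    exact ((Equiv.neg ℤ).hasSum_iff).mpr hL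
  have hpair : HasSum (fun n : ℤ => f n + f (-n)) (L + L) := hL.add hLneg
  have keyid : ∀ n : ℤ, f n + f (-n)
      = (4/Complex.sin (2*z)) * ((-1)^n * α * Complex.sin (2*z) / ((π:ℂ)*(α^2 - (n:ℂ)^2))) := by
    intro n
    have h1 : ((π:ℂ)*(n:ℂ)/2 - z) ≠ 0 := sub_ne_zero.mpr (fun h => hz n h.symm)
    have h1' : ((π:ℂ)*((-n:ℤ):ℂ)/2 - z) ≠ 0 := sub_ne_zero.mpr (fun h => hz (-n) h.symm)
    have h2 : (1 + ((π:ℂ)*(n:ℂ)/2)^2) ≠ 0 := by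
      rw [show (1 + ((π:ℂ)*(n:ℂ)/2)^2) = ((1 + (π*(n:ℝ)/2)^2 : ℝ):ℂ) by push_cast; ring]
      exact_mod_cast (by positivity : (1 + (π*(n:ℝ)/2)^2 : ℝ) ≠ 0)
    have h2' : (1 + ((π:ℂ)*((-n:ℤ):ℂ)/2)^2) ≠ 0 := by
      rw [show (1 + ((π:ℂ)*((-n:ℤ):ℂ)/2)^2) = ((1 + (π*(n:ℝ)/2)^2 : ℝ):ℂ) by push_cast; ring]
      exact_mod_cast (by positivity : (1 + (π*(n:ℝ)/2)^2 : ℝ) ≠ 0)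
    have h3 : α - n ≠ 0 := sub_ne_zero.mpr (hα n)
    have h3' : α + n ≠ 0 := fun h => hα (-n) (by push_cast; linear_combination h)
    have hz1 : (-1:ℂ)^(n+1) = -(-1:ℂ)^n := by
      rw [zpow_add₀ (by norm_num : (-1:ℂ) ≠ 0), zpow_one]; ring
    have hz2 : (-1:ℂ)^(-n+1) = -(-1:ℂ)^n := by
      rw [zpow_add₀ (by norm_num : (-1:ℂ) ≠ 0), zpow_one, aux_neg_one_zpow_neg]; ring
    have hαn2 : α^2 - (n:ℂ)^2 ≠ 0 := by
      intro h
      rcases mul_eq_zero.mp (by linear_combination h : (α - n)*(α + n) = 0) with h' | h'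
      exacts [h3 h', h3' h']
    have hzα : z = (π:ℂ)*α/2 := by rw [hα_def]; field_simp
    have hQ1 : (1 + ((π:ℂ)*(n:ℂ)/2)^2) * ((π:ℂ)*(n:ℂ)/2 - (π:ℂ)*α/2) ≠ 0 :=
      mul_ne_zero h2 (by rw [← hzα]; exact h1)
    have hQ2 : (1 + ((π:ℂ)*(-(n:ℂ))/2)^2) * ((π:ℂ)*(-(n:ℂ))/2 - (π:ℂ)*α/2) ≠ 0 := by
      refine mul_ne_zero ?_ (by rw [← hzα]; push_cast at h1' ⊢; exact h1')
      push_cast at h2' ⊢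
      exact h2'
    have hs' : Complex.sin (2*((π:ℂ)*α/2)) ≠ 0 := by rw [← hzα]; exact hs
    have hS : Complex.sin (2*((π:ℂ)*α/2)) * ((π:ℂ)*(α^2 - (n:ℂ)^2)) ≠ 0 :=
      mul_ne_zero hs' (mul_ne_zero hπ hαn2)
    rw [hf_def]
    simp only [hz1, hz2, Int.cast_neg]
    rw [hzα]
    rw [div_mul_div_comm, div_mul_div_comm, div_mul_div_comm]
    rw [div_add_div _ _ hQ1 hQ2, div_eq_div_iff (mul_ne_zero hQ1 hQ2) hS]
    ring
  have hpair' : HasSum (fun n : ℤ => f n + f (-n)) ((4/Complex.sin (2*z)) * 1) := by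
    rw [show (fun n : ℤ => f n + f (-n)) = fun n : ℤ =>
        (4/Complex.sin (2*z)) * ((-1)^n * α * Complex.sin (2*z) / ((π:ℂ)*(α^2 - (n:ℂ)^2)))
      from funext keyid]
    exact hFsum.mul_left _
  have hLval : L = 2/Complex.sin (2*z) := by
    have h4 := hpair.unique hpair'
    have : L + L = 4/Complex.sin (2*z) := by rw [h4]; ring
    linear_combination this/2
  rw [← hLval]
  exact hL
end
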